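/- arXiv:1510.00384 — 3 statements merged into one kernel-verified Lean document; each statement's English description precedes it below -/
import Mathlib

section
/- Let f = Σ_{i=1}^n a_i 1_{U_i} be a piecewise constant image, and let μ be a trigonometric polynomial with coefficient support Λ and coefficients c = (c[k] : k ∈ Λ) that vanishes at every point of the edge set E = ∪_{i=1}^n ∂U_i. Then for every ℓ ∈ ℤ², both Σ_{k ∈ Λ} c[k] · 2πi (ℓ−k)_x · f̂[ℓ−k] = 0 and Σ_{k ∈ Λ} c[k] · 2πi (ℓ−k)_y · f̂[ℓ−k] = 0; that is, the Fourier coefficients of the gradient of f are annihilated by convolution with the coefficients of μ. -/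
open MeasureTheory Set
open scoped Pointwise

noncomputable section

/-- The unit square `[0,1]²`. -/
def box : Set (ℝ × ℝ) := Set.Icc (0:ℝ) 1 ×ˢ Set.Icc (0:ℝ) 1

/-- The complex exponential `e^{2πi k·r}` with integer frequency `k`. -/
def e2 (k : ℤ × ℤ) (r : ℝ × ℝ) : ℂ :=
  Complex.exp (2 * Real.pi * Complex.I * ((k.1 : ℂ) * (r.1 : ℂ) + (k.2 : ℂ) * (r.2 : ℂ)))

/-- The trigonometric sum with coefficient support `Λ` and coefficients `c`. -/
def trigSum (Λ : Finset (ℤ × ℤ)) (c : ℤ × ℤ → ℂ) : (ℝ × ℝ) → ℂ :=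
  fun r => ∑ k ∈ Λ, c k * e2 k r

/-- The Fourier coefficient `f̂[m] = ∫_{[0,1]²} f(r) e^{-2πi m·r} dr`. -/
def fourierCoeff2 (f : ℝ × ℝ → ℂ) (m : ℤ × ℤ) : ℂ :=
  ∫ r in box, f r * Complex.exp (-(2 * Real.pi * Complex.I *
    ((m.1 : ℂ) * (r.1 : ℂ) + (m.2 : ℂ) * (r.2 : ℂ))))

/-- `d` (supported on `Λ`) satisfies the annihilation equation for `f` at `ℓ`:
`∑_{k ∈ Λ} d[k] ⋅ 2πi (ℓ-k)_x ⋅ f̂[ℓ-k] = 0` and likewise for the `y`-component. -/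
def Annihilates (Λ : Finset (ℤ × ℤ)) (d : ℤ × ℤ → ℂ) (f : ℝ × ℝ → ℂ) (ℓ : ℤ × ℤ) : Prop :=
  (∑ k ∈ Λ, d k * (2 * Real.pi * Complex.I * (((ℓ - k).1 : ℂ))) * fourierCoeff2 f (ℓ - k)) = 0 ∧
  (∑ k ∈ Λ, d k * (2 * Real.pi * Complex.I * (((ℓ - k).2 : ℂ))) * fourierCoeff2 f (ℓ - k)) = 0


/-! ### Auxiliary lemmas -/

lemma comp_eq_Ioo {C : Set ℝ} (hC : IsOpen C) (hconn : IsPreconnected C)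
    (hne : C.Nonempty) (hbd : C ⊆ Ioo 0 1) :
    C = Ioo (sInf C) (sSup C) := by
  have hbb : BddBelow C := ⟨0, fun x hx => (hbd hx).1.le⟩
  have hba : BddAbove C := ⟨1, fun x hx => (hbd hx).2.le⟩
  have hord := hconn.ordConnected
  ext t
  constructor
  · intro ht
    obtain ⟨l, u, htlu, hsub⟩ := mem_nhds_iff_exists_Ioo_subset.1 (hC.mem_nhds ht)
    constructor
    · have h1 : (l + t)/2 ∈ C := hsub ⟨by linarith [htlu.1], by linarith [htlu.1, htlu.2]⟩
      calc sInf C ≤ (l + t)/2 := csInf_le hbb h1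
        _ < t := by linarith [htlu.1]
    · have h1 : (t + u)/2 ∈ C := hsub ⟨by linarith [htlu.1, htlu.2], by linarith [htlu.2]⟩
      calc t < (t + u)/2 := by linarith [htlu.2]
        _ ≤ sSup C := le_csSup hba h1
  · intro ht
    obtain ⟨u, huC, hu⟩ := exists_lt_of_csInf_lt hne ht.1
    obtain ⟨v, hvC, hv⟩ := exists_lt_of_lt_csSup hne ht.2
    exact hord.out huC hvC ⟨hu.le, hv.le⟩

lemma endpoints_frontier {V : Set ℝ} (hV : IsOpen V) (hVb : V ⊆ Ioo 0 1)
    {x : ℝ} (hx : x ∈ V) :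
    sInf (connectedComponentIn V x) ∈ frontier V ∧
      sSup (connectedComponentIn V x) ∈ frontier V := by
  set C := connectedComponentIn V x with hCdef
  have hCV : C ⊆ V := connectedComponentIn_subset V x
  have hCo : IsOpen C := hV.connectedComponentIn
  have hCc : IsPreconnected C := isPreconnected_connectedComponentIn
  have hCne : C.Nonempty := ⟨x, mem_connectedComponentIn hx⟩
  have hCb : C ⊆ Ioo 0 1 := hCV.trans hVb
  have hbb : BddBelow C := ⟨0, fun y hy => (hCb hy).1.le⟩
  have hba : BddAbove C := ⟨1, fun y hy => (hCb hy).2.le⟩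
  have hIoo := comp_eq_Ioo hCo hCc hCne hCb
  have hclos : closure C ⊆ closure V := closure_mono hCV
  have hnotmem : ∀ z : ℝ, z ∈ closure C → z ∉ C → z ∉ V := by
    intro z hzc hznC hzV
    obtain ⟨l, u, hzlu, hsub⟩ := mem_nhds_iff_exists_Ioo_subset.1 (hV.mem_nhds hzV)
    have hint : (C ∩ Ioo l u).Nonempty := by
      rcases _root_.mem_closure_iff.1 hzc (Ioo l u) isOpen_Ioo hzlu with ⟨w, hw1, hw2⟩
      exact ⟨w, hw2, hw1⟩
    have hD : IsPreconnected (C ∪ Ioo l u) := hCc.union' hint isPreconnected_Ioo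
    have hDsub : C ∪ Ioo l u ⊆ V := union_subset hCV hsub
    have hDx : x ∈ C ∪ Ioo l u := Or.inl (mem_connectedComponentIn hx)
    have := hD.subset_connectedComponentIn hDx hDsub
    exact hznC (this (Or.inr hzlu))
  constructor
  · have h1 : sInf C ∈ closure C := csInf_mem_closure hCne hbb
    have h2 : sInf C ∉ C := fun h => lt_irrefl _ (subset_of_eq hIoo h).1
    exact ⟨hclos h1, fun h => hnotmem _ h1 h2 (by rwa [hV.interior_eq] at h)⟩
  · have h1 : sSup C ∈ closure C := csSup_mem_closure hCne hba
    have h2 : sSup C ∉ C := fun h => lt_irrefl _ (subset_of_eq hIoo h).2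
    exact ⟨hclos h1, fun h => hnotmem _ h1 h2 (by rwa [hV.interior_eq] at h)⟩

lemma oneD {g g' : ℝ → ℂ} (hg : ∀ x, HasDerivAt g (g' x) x) (hg'c : Continuous g')
    {V : Set ℝ} (hV : IsOpen V) (hVb : V ⊆ Ioo 0 1)
    (h0 : ∀ x ∈ frontier V, g x = 0) : ∫ x in V, g' x = 0 := by
  classical
  let ι := {q : ℚ // (q : ℝ) ∈ V}
  let good : ι → Prop := fun q => ∀ q' : ι,
    connectedComponentIn V (q' : ℚ) = connectedComponentIn V ((q : ℚ) : ℝ) →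
      Encodable.encode (q : ℚ) ≤ Encodable.encode (q' : ℚ)
  let s : ι → Set ℝ := fun q => if good q then connectedComponentIn V ((q : ℚ) : ℝ) else ∅
  have hsV : ∀ q, s q ⊆ V := by
    intro q
    by_cases h : good q
    · simp only [s, if_pos h]; exact connectedComponentIn_subset V _
    · simp [s, if_neg h]
  have hunion : ⋃ q, s q = V := by
    apply subset_antisymm (iUnion_subset hsV)
    intro x hx
    have hCo : IsOpen (connectedComponentIn V x) := hV.connectedComponentIn
    have hCne : (connectedComponentIn V x).Nonempty := ⟨x, mem_connectedComponentIn hx⟩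
    obtain ⟨q, hq⟩ := Rat.denseRange_cast.exists_mem_open hCo hCne
    have hqV : (q : ℝ) ∈ V := connectedComponentIn_subset V x hq
    let T : Set ℕ := {n | ∃ q' : ι, Encodable.encode (q' : ℚ) = n ∧
      connectedComponentIn V ((q' : ℚ) : ℝ) = connectedComponentIn V x}
    have hTne : T.Nonempty := ⟨Encodable.encode q, ⟨q, hqV⟩, rfl, (connectedComponentIn_eq hq).symm⟩
    obtain ⟨q₀, hq₀enc, hq₀comp⟩ := Nat.sInf_mem hTne
    refine mem_iUnion.2 ⟨q₀, ?_⟩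
    have hgood : good q₀ := by
      intro q' hq'
      rw [hq₀enc]
      exact Nat.sInf_le ⟨q', rfl, hq'.trans hq₀comp⟩
    simp only [s, if_pos hgood, hq₀comp]
    exact mem_connectedComponentIn hx
  have hdisj : Pairwise (Function.onFun Disjoint s) := by
    intro q q' hne
    by_cases hq : good q
    · by_cases hq' : good q'
      · simp only [Function.onFun, s, if_pos hq, if_pos hq']
        by_contra hnd
        obtain ⟨z, hz1, hz2⟩ := Set.not_disjoint_iff.1 hnd
        have h1 : connectedComponentIn V ((q' : ℚ) : ℝ) = connectedComponentIn V ((q : ℚ) : ℝ) :=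
          (connectedComponentIn_eq hz2).trans (connectedComponentIn_eq hz1).symm
        have e1 := hq q' h1
        have e2 := hq' q h1.symm
        exact hne (Subtype.ext (Encodable.encode_injective (le_antisymm e1 e2)))
      · simp [Function.onFun, s, if_neg hq']
    · simp [Function.onFun, s, if_neg hq]
  have hmeas : ∀ q, MeasurableSet (s q) := by
    intro q
    by_cases h : good q
    · simp only [s, if_pos h]; exact hV.connectedComponentIn.measurableSet
    · simp [s, if_neg h]
  have hintV : IntegrableOn g' V := by
    exact (hg'c.integrableOn_Icc (a := (0:ℝ)) (b := 1)).mono_set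
      (hVb.trans Ioo_subset_Icc_self)
  rw [← hunion, integral_iUnion hmeas hdisj (by rwa [hunion])]
  have hzero : ∀ q : ι, (∫ x in s q, g' x) = 0 := by
    intro q
    by_cases h : good q
    · simp only [s, if_pos h]
      have hqV : (((q : ℚ) : ℝ)) ∈ V := q.2
      have hCo : IsOpen (connectedComponentIn V ((q : ℚ) : ℝ)) := hV.connectedComponentIn
      have hCc : IsPreconnected (connectedComponentIn V ((q : ℚ) : ℝ)) :=
        isPreconnected_connectedComponentIn
      have hCne : (connectedComponentIn V ((q : ℚ) : ℝ)).Nonempty :=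
        ⟨_, mem_connectedComponentIn hqV⟩
      have hCb : (connectedComponentIn V ((q : ℚ) : ℝ)) ⊆ Ioo 0 1 :=
        (connectedComponentIn_subset V _).trans hVb
      have hIoo := comp_eq_Ioo hCo hCc hCne hCb
      obtain ⟨hfa, hfb⟩ := endpoints_frontier hV hVb hqV
      have hab : sInf (connectedComponentIn V ((q : ℚ) : ℝ)) ≤
          sSup (connectedComponentIn V ((q : ℚ) : ℝ)) := by
        obtain ⟨t, ht⟩ := hCne
        have h2 := subset_of_eq hIoo ht
        linarith [h2.1, h2.2]
      rw [hIoo, ← integral_Ioc_eq_integral_Ioo, ← intervalIntegral.integral_of_le hab,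
        intervalIntegral.integral_eq_sub_of_hasDerivAt (fun x _ => hg x)
          (hg'c.intervalIntegrable _ _), h0 _ hfa, h0 _ hfb, sub_zero]
    · simp [s, if_neg h]
  simp only [hzero]
  exact tsum_zero

lemma twoD {h H : ℝ × ℝ → ℂ}
    (hd : ∀ p : ℝ × ℝ, HasDerivAt (fun x => h (x, p.2)) (H p) p.1)
    (hHc : Continuous H)
    {U : Set (ℝ × ℝ)} (hU : IsOpen U) (hUs : U ⊆ Ioo (0:ℝ) 1 ×ˢ Ioo (0:ℝ) 1)
    (hh : ∀ p ∈ frontier U, h p = 0) :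
    ∫ p in U, H p = 0 := by
  have hK : IsCompact (Icc (0:ℝ) 1 ×ˢ Icc (0:ℝ) 1) := isCompact_Icc.prod isCompact_Icc
  have hUK : U ⊆ Icc (0:ℝ) 1 ×ˢ Icc (0:ℝ) 1 :=
    hUs.trans (prod_mono Ioo_subset_Icc_self Ioo_subset_Icc_self)
  have hIntU : IntegrableOn H U :=
    (hHc.continuousOn.integrableOn_compact hK).mono_set hUK
  have hInd : Integrable (indicator U H) := hIntU.integrable_indicator hU.measurableSet
  rw [← integral_indicator hU.measurableSet]
  rw [show (volume : Measure (ℝ × ℝ)) = (volume : Measure ℝ).prod volume from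
    Measure.volume_eq_prod ℝ ℝ]
  rw [integral_prod_symm _ (by rw [← Measure.volume_eq_prod ℝ ℝ]; exact hInd)]
  have hinner : ∀ y : ℝ, (∫ x : ℝ, indicator U H (x, y)) = 0 := by
    intro y
    set V : Set ℝ := (fun x => (x, y)) ⁻¹' U with hVdef
    have hcont : Continuous (fun x : ℝ => (x, y)) := continuous_id.prodMk continuous_const
    have hVo : IsOpen V := hU.preimage hcont
    have hVb : V ⊆ Ioo 0 1 := fun x hx => (hUs hx).1
    have hfr : ∀ x ∈ frontier V, h (x, y) = 0 := by
      intro x hx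
      rw [hVo.frontier_eq] at hx
      refine hh _ ?_
      rw [hU.frontier_eq]
      exact ⟨hcont.closure_preimage_subset U hx.1, hx.2⟩
    have h1 : (∫ x : ℝ, indicator U H (x, y)) = ∫ x in V, H (x, y) := by
      rw [← integral_indicator hVo.measurableSet]
      refine integral_congr_ae (Filter.Eventually.of_forall fun x => ?_)
      show U.indicator H (x, y) = V.indicator (fun x => H (x, y)) x
      by_cases hx : x ∈ V
      · rw [indicator_of_mem (mem_preimage.1 hx), indicator_of_mem hx]
      · rw [indicator_of_notMem (fun hc => hx (mem_preimage.2 hc)), indicator_of_notMem hx]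
    rw [h1]
    exact oneD (g := fun x => h (x, y)) (g' := fun x => H (x, y))
      (fun x => hd (x, y)) (hHc.comp hcont) hVo hVb hfr
  simp only [hinner, integral_zero]

lemma twoD' {h H : ℝ × ℝ → ℂ}
    (hd : ∀ p : ℝ × ℝ, HasDerivAt (fun y => h (p.1, y)) (H p) p.2)
    (hHc : Continuous H)
    {U : Set (ℝ × ℝ)} (hU : IsOpen U) (hUs : U ⊆ Ioo (0:ℝ) 1 ×ˢ Ioo (0:ℝ) 1)
    (hh : ∀ p ∈ frontier U, h p = 0) :
    ∫ p in U, H p = 0 := by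
  have hswap : MeasurePreserving (Prod.swap : ℝ × ℝ → ℝ × ℝ) volume volume := by
    rw [show (volume : Measure (ℝ × ℝ)) = (volume : Measure ℝ).prod volume from
      Measure.volume_eq_prod ℝ ℝ]
    exact Measure.measurePreserving_swap
  have hkey : ∫ p in (Prod.swap ⁻¹' U : Set (ℝ × ℝ)), H (Prod.swap p) = ∫ p in U, H p :=
    hswap.setIntegral_preimage_emb MeasurableEquiv.prodComm.measurableEmbedding _ _
  rw [← hkey]
  refine twoD (h := h ∘ Prod.swap) (H := H ∘ Prod.swap) ?_ (hHc.comp continuous_swap)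
    (hU.preimage continuous_swap) ?_ ?_
  · intro p
    exact hd (p.2, p.1)
  · intro p hp
    have := hUs hp
    exact ⟨this.2, this.1⟩
  · intro p hp
    have e : frontier (Prod.swap ⁻¹' U : Set (ℝ × ℝ)) = Prod.swap ⁻¹' frontier U :=
      ((Homeomorph.prodComm ℝ ℝ).preimage_frontier U).symm
    have hp2 : p ∈ Prod.swap ⁻¹' frontier U := by rw [← e]; exact hp
    exact hh _ hp2

lemma e2_cont (m : ℤ × ℤ) : Continuous (e2 m) := by
  unfold e2
  fun_prop

lemma e2_dx (m : ℤ × ℤ) (p : ℝ × ℝ) :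
    HasDerivAt (fun x : ℝ => e2 m (x, p.2))
      (2 * Real.pi * Complex.I * (m.1 : ℂ) * e2 m p) p.1 := by
  have key := ((((hasDerivAt_id ((p.1 : ℝ) : ℂ)).const_mul
      (2 * Real.pi * Complex.I * (m.1 : ℂ))).add_const
      (2 * Real.pi * Complex.I * (m.2 : ℂ) * (p.2 : ℂ))).cexp).comp_ofReal
  have hfun : (fun x : ℝ => Complex.exp (2 * Real.pi * Complex.I * (m.1 : ℂ) * (x : ℂ) +
      2 * Real.pi * Complex.I * (m.2 : ℂ) * (p.2 : ℂ))) = fun x : ℝ => e2 m (x, p.2) := by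
    funext x
    unfold e2
    congr 1
    ring
  have hval : 2 * Real.pi * Complex.I * (m.1 : ℂ) * e2 m p =
      Complex.exp (2 * Real.pi * Complex.I * (m.1 : ℂ) * ((p.1 : ℝ) : ℂ) +
        2 * Real.pi * Complex.I * (m.2 : ℂ) * (p.2 : ℂ)) *
      (2 * Real.pi * Complex.I * (m.1 : ℂ) * 1) := by
    unfold e2
    rw [show 2 * Real.pi * Complex.I * (m.1 : ℂ) * ((p.1 : ℝ) : ℂ) +
        2 * Real.pi * Complex.I * (m.2 : ℂ) * (p.2 : ℂ) =
        2 * Real.pi * Complex.I * ((m.1 : ℂ) * (p.1 : ℂ) + (m.2 : ℂ) * (p.2 : ℂ)) from by ring]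
    ring
  rw [← hfun, hval]
  exact key

lemma e2_dy (m : ℤ × ℤ) (p : ℝ × ℝ) :
    HasDerivAt (fun y : ℝ => e2 m (p.1, y))
      (2 * Real.pi * Complex.I * (m.2 : ℂ) * e2 m p) p.2 := by
  have key := ((((hasDerivAt_id ((p.2 : ℝ) : ℂ)).const_mul
      (2 * Real.pi * Complex.I * (m.2 : ℂ))).add_const
      (2 * Real.pi * Complex.I * (m.1 : ℂ) * (p.1 : ℂ))).cexp).comp_ofReal
  have hfun : (fun y : ℝ => Complex.exp (2 * Real.pi * Complex.I * (m.2 : ℂ) * (y : ℂ) +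
      2 * Real.pi * Complex.I * (m.1 : ℂ) * (p.1 : ℂ))) = fun y : ℝ => e2 m (p.1, y) := by
    funext y
    unfold e2
    congr 1
    ring
  have hval : 2 * Real.pi * Complex.I * (m.2 : ℂ) * e2 m p =
      Complex.exp (2 * Real.pi * Complex.I * (m.2 : ℂ) * ((p.2 : ℝ) : ℂ) +
        2 * Real.pi * Complex.I * (m.1 : ℂ) * (p.1 : ℂ)) *
      (2 * Real.pi * Complex.I * (m.2 : ℂ) * 1) := by
    unfold e2
    rw [show 2 * Real.pi * Complex.I * (m.2 : ℂ) * ((p.2 : ℝ) : ℂ) +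
        2 * Real.pi * Complex.I * (m.1 : ℂ) * (p.1 : ℂ) =
        2 * Real.pi * Complex.I * ((m.1 : ℂ) * (p.1 : ℂ) + (m.2 : ℂ) * (p.2 : ℂ)) from by ring]
    ring
  rw [← hfun, hval]
  exact key


/-- If `f = ∑ aᵢ 1_{Uᵢ}` is a piecewise constant image and `μ` is a
trigonometric polynomial with coefficients `c` on `Λ` vanishing on the edge set
`⋃ ∂Uᵢ`, then the Fourier coefficients of the gradient of `f` are annihilated by
convolution with `c`, at every `ℓ ∈ ℤ²`. -/
theorem stmt0
    (n : ℕ) (a : Fin n → ℂ) (U : Fin n → Set (ℝ × ℝ))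
    (ha : ∀ i, a i ≠ 0)
    (hopen : ∀ i, IsOpen (U i))
    (hne : ∀ i, (U i).Nonempty)
    (hsub : ∀ i, U i ⊆ Set.Ioo (0:ℝ) 1 ×ˢ Set.Ioo (0:ℝ) 1)
    (hdisj : ∀ i j, i ≠ j → Disjoint (U i) (U j))
    (f : ℝ × ℝ → ℂ)
    (hf : f = fun r => ∑ i, Set.indicator (U i) (fun _ => a i) r)
    (Λ : Finset (ℤ × ℤ)) (c : ℤ × ℤ → ℂ) (μ : ℝ × ℝ → ℂ)
    (hμrep : μ = trigSum Λ c) (hμ0 : μ ≠ 0)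
    (hvanish : ∀ r ∈ ⋃ i, frontier (U i), μ r = 0) :
    ∀ ℓ : ℤ × ℤ, Annihilates Λ c f ℓ := by
  intro ℓ
  classical
  have hboxc : IsCompact box := isCompact_Icc.prod isCompact_Icc
  have hUbox : ∀ i, U i ⊆ box := fun i =>
    (hsub i).trans (prod_mono Ioo_subset_Icc_self Ioo_subset_Icc_self)
  set Hx : ℝ × ℝ → ℂ := fun r =>
    ∑ k ∈ Λ, c k * (2 * Real.pi * Complex.I * (((k - ℓ).1 : ℂ))) * e2 (k - ℓ) r with hHxdef
  set Hy : ℝ × ℝ → ℂ := fun r =>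
    ∑ k ∈ Λ, c k * (2 * Real.pi * Complex.I * (((k - ℓ).2 : ℂ))) * e2 (k - ℓ) r with hHydef
  set h : ℝ × ℝ → ℂ := fun r => ∑ k ∈ Λ, c k * e2 (k - ℓ) r with hhdef
  have hHxc : Continuous Hx := by
    rw [hHxdef]; exact continuous_finset_sum _ fun k _ => continuous_const.mul (e2_cont _)
  have hHyc : Continuous Hy := by
    rw [hHydef]; exact continuous_finset_sum _ fun k _ => continuous_const.mul (e2_cont _)
  have hhx : ∀ p : ℝ × ℝ, HasDerivAt (fun x => h (x, p.2)) (Hx p) p.1 := by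
    intro p
    have key := HasDerivAt.fun_sum (u := Λ)
      (A := fun k (x : ℝ) => c k * e2 (k - ℓ) (x, p.2))
      (A' := fun k => c k * (2 * Real.pi * Complex.I * (((k - ℓ).1 : ℂ)) * e2 (k - ℓ) p))
      (fun k _ => (e2_dx (k - ℓ) p).const_mul (c k))
    have heq : Hx p = ∑ k ∈ Λ,
        c k * (2 * Real.pi * Complex.I * (((k - ℓ).1 : ℂ)) * e2 (k - ℓ) p) := by
      simp only [hHxdef]
      exact Finset.sum_congr rfl fun k _ => by ring
    rw [heq]
    exact key
  have hhy : ∀ p : ℝ × ℝ, HasDerivAt (fun y => h (p.1, y)) (Hy p) p.2 := by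
    intro p
    have key := HasDerivAt.fun_sum (u := Λ)
      (A := fun k (y : ℝ) => c k * e2 (k - ℓ) (p.1, y))
      (A' := fun k => c k * (2 * Real.pi * Complex.I * (((k - ℓ).2 : ℂ)) * e2 (k - ℓ) p))
      (fun k _ => (e2_dy (k - ℓ) p).const_mul (c k))
    have heq : Hy p = ∑ k ∈ Λ,
        c k * (2 * Real.pi * Complex.I * (((k - ℓ).2 : ℂ)) * e2 (k - ℓ) p) := by
      simp only [hHydef]
      exact Finset.sum_congr rfl fun k _ => by ring
    rw [heq]
    exact key
  have hvanish' : ∀ i, ∀ p ∈ frontier (U i), h p = 0 := by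
    intro i p hp
    have hμp : μ p = 0 := hvanish p (mem_iUnion.2 ⟨i, hp⟩)
    have hsplit : h p = μ p * Complex.exp (-(2 * Real.pi * Complex.I *
        ((ℓ.1 : ℂ) * (p.1 : ℂ) + (ℓ.2 : ℂ) * (p.2 : ℂ)))) := by
      rw [hμrep]
      simp only [hhdef, trigSum, Finset.sum_mul]
      refine Finset.sum_congr rfl fun k _ => ?_
      rw [mul_assoc]
      congr 1
      unfold e2
      rw [← Complex.exp_add]
      congr 1
      push_cast [Prod.fst_sub, Prod.snd_sub]
      ring
    rw [hsplit, hμp, zero_mul]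
  have hUint : ∀ (i : Fin n) (G : ℝ × ℝ → ℂ), Continuous G →
      Integrable (indicator (U i) (fun r => a i * G r)) (volume.restrict box) :=
    fun i G hG => ((continuous_const.mul hG).continuousOn.integrableOn_compact
      hboxc).indicator (hopen i).measurableSet
  have hfeq : ∀ (G : ℝ × ℝ → ℂ) (r : ℝ × ℝ),
      f r * G r = ∑ i, indicator (U i) (fun r => a i * G r) r := by
    intro G r
    rw [hf]
    show (∑ i, Set.indicator (U i) (fun _ => a i) r) * G r = _
    rw [Finset.sum_mul]
    refine Finset.sum_congr rfl fun i _ => ?_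
    by_cases hr : r ∈ U i
    · rw [indicator_of_mem hr, indicator_of_mem hr]
    · rw [indicator_of_notMem hr, indicator_of_notMem hr, zero_mul]
  have hfint : ∀ G : ℝ × ℝ → ℂ, Continuous G → IntegrableOn (fun r => f r * G r) box := by
    intro G hG
    have heq : (fun r => f r * G r) = fun r => ∑ i, indicator (U i) (fun r => a i * G r) r :=
      funext (hfeq G)
    rw [IntegrableOn, heq]
    exact integrable_finset_sum _ fun i _ => hUint i G hG
  have hzero : ∀ G : ℝ × ℝ → ℂ, Continuous G → (∀ i, (∫ r in U i, G r) = 0) →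
      (∫ r in box, f r * G r) = 0 := by
    intro G hG hGi
    calc ∫ r in box, f r * G r
        = ∫ r in box, ∑ i, indicator (U i) (fun r => a i * G r) r :=
          integral_congr_ae (Filter.Eventually.of_forall fun r => hfeq G r)
      _ = ∑ i, ∫ r in box, indicator (U i) (fun r => a i * G r) r :=
          integral_finset_sum _ fun i _ => hUint i G hG
      _ = 0 := Finset.sum_eq_zero fun i _ => by
          rw [integral_indicator (hopen i).measurableSet,
            Measure.restrict_restrict (hopen i).measurableSet,
            inter_eq_self_of_subset_left (hUbox i), integral_const_mul _, hGi i, mul_zero]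
  constructor
  · have hterm : ∀ k ∈ Λ, c k * (2 * Real.pi * Complex.I * (((ℓ - k).1 : ℂ))) *
        fourierCoeff2 f (ℓ - k) =
        ∫ r in box, c k * (2 * Real.pi * Complex.I * (((ℓ - k).1 : ℂ))) *
          (f r * Complex.exp (-(2 * Real.pi * Complex.I *
            (((ℓ - k).1 : ℂ) * (r.1 : ℂ) + ((ℓ - k).2 : ℂ) * (r.2 : ℂ))))) := by
      intro k _
      simp only [fourierCoeff2]
      rw [← integral_const_mul _]
    have hpt : ∀ r : ℝ × ℝ, (∑ k ∈ Λ, c k * (2 * Real.pi * Complex.I * (((ℓ - k).1 : ℂ))) *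
        (f r * Complex.exp (-(2 * Real.pi * Complex.I *
          (((ℓ - k).1 : ℂ) * (r.1 : ℂ) + ((ℓ - k).2 : ℂ) * (r.2 : ℂ)))))) = -(f r * Hx r) := by
      intro r
      have hstep : ∀ k ∈ Λ, c k * (2 * Real.pi * Complex.I * (((ℓ - k).1 : ℂ))) *
          (f r * Complex.exp (-(2 * Real.pi * Complex.I *
            (((ℓ - k).1 : ℂ) * (r.1 : ℂ) + ((ℓ - k).2 : ℂ) * (r.2 : ℂ))))) =
          -(f r * (c k * (2 * Real.pi * Complex.I * (((k - ℓ).1 : ℂ))) * e2 (k - ℓ) r)) := by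
        intro k _
        have hexp : Complex.exp (-(2 * Real.pi * Complex.I *
            (((ℓ - k).1 : ℂ) * (r.1 : ℂ) + ((ℓ - k).2 : ℂ) * (r.2 : ℂ)))) = e2 (k - ℓ) r := by
          unfold e2
          congr 1
          push_cast [Prod.fst_sub, Prod.snd_sub]
          ring
        rw [hexp]
        have hc : (((ℓ - k).1 : ℤ) : ℂ) = -(((k - ℓ).1 : ℤ) : ℂ) := by
          push_cast [Prod.fst_sub]
          ring
        rw [hc]
        ring
      rw [Finset.sum_congr rfl hstep, Finset.sum_neg_distrib]
      simp only [hHxdef]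
      rw [Finset.mul_sum]
    calc ∑ k ∈ Λ, c k * (2 * Real.pi * Complex.I * (((ℓ - k).1 : ℂ))) *
          fourierCoeff2 f (ℓ - k)
        = ∑ k ∈ Λ, ∫ r in box, c k * (2 * Real.pi * Complex.I * (((ℓ - k).1 : ℂ))) *
            (f r * Complex.exp (-(2 * Real.pi * Complex.I *
              (((ℓ - k).1 : ℂ) * (r.1 : ℂ) + ((ℓ - k).2 : ℂ) * (r.2 : ℂ))))) :=
          Finset.sum_congr rfl hterm
      _ = ∫ r in box, ∑ k ∈ Λ, c k * (2 * Real.pi * Complex.I * (((ℓ - k).1 : ℂ))) *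
            (f r * Complex.exp (-(2 * Real.pi * Complex.I *
              (((ℓ - k).1 : ℂ) * (r.1 : ℂ) + ((ℓ - k).2 : ℂ) * (r.2 : ℂ))))) :=
          (integral_finset_sum _ (fun k _ => (hfint _ (by fun_prop)).const_mul _)).symm
      _ = ∫ r in box, -(f r * Hx r) :=
          integral_congr_ae (Filter.Eventually.of_forall hpt)
      _ = -(∫ r in box, f r * Hx r) := by rw [integral_neg]
      _ = 0 := by
          rw [hzero Hx hHxc (fun i => twoD hhx hHxc (hopen i) (hsub i) (hvanish' i)), neg_zero]
  · have hterm : ∀ k ∈ Λ, c k * (2 * Real.pi * Complex.I * (((ℓ - k).2 : ℂ))) *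
        fourierCoeff2 f (ℓ - k) =
        ∫ r in box, c k * (2 * Real.pi * Complex.I * (((ℓ - k).2 : ℂ))) *
          (f r * Complex.exp (-(2 * Real.pi * Complex.I *
            (((ℓ - k).1 : ℂ) * (r.1 : ℂ) + ((ℓ - k).2 : ℂ) * (r.2 : ℂ))))) := by
      intro k _
      simp only [fourierCoeff2]
      rw [← integral_const_mul _]
    have hpt : ∀ r : ℝ × ℝ, (∑ k ∈ Λ, c k * (2 * Real.pi * Complex.I * (((ℓ - k).2 : ℂ))) *
        (f r * Complex.exp (-(2 * Real.pi * Complex.I *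
          (((ℓ - k).1 : ℂ) * (r.1 : ℂ) + ((ℓ - k).2 : ℂ) * (r.2 : ℂ)))))) = -(f r * Hy r) := by
      intro r
      have hstep : ∀ k ∈ Λ, c k * (2 * Real.pi * Complex.I * (((ℓ - k).2 : ℂ))) *
          (f r * Complex.exp (-(2 * Real.pi * Complex.I *
            (((ℓ - k).1 : ℂ) * (r.1 : ℂ) + ((ℓ - k).2 : ℂ) * (r.2 : ℂ))))) =
          -(f r * (c k * (2 * Real.pi * Complex.I * (((k - ℓ).2 : ℂ))) * e2 (k - ℓ) r)) := by
        intro k _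
        have hexp : Complex.exp (-(2 * Real.pi * Complex.I *
            (((ℓ - k).1 : ℂ) * (r.1 : ℂ) + ((ℓ - k).2 : ℂ) * (r.2 : ℂ)))) = e2 (k - ℓ) r := by
          unfold e2
          congr 1
          push_cast [Prod.fst_sub, Prod.snd_sub]
          ring
        rw [hexp]
        have hc : (((ℓ - k).2 : ℤ) : ℂ) = -(((k - ℓ).2 : ℤ) : ℂ) := by
          push_cast [Prod.snd_sub]
          ring
        rw [hc]
        ring
      rw [Finset.sum_congr rfl hstep, Finset.sum_neg_distrib]
      simp only [hHydef]
      rw [Finset.mul_sum]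
    calc ∑ k ∈ Λ, c k * (2 * Real.pi * Complex.I * (((ℓ - k).2 : ℂ))) *
          fourierCoeff2 f (ℓ - k)
        = ∑ k ∈ Λ, ∫ r in box, c k * (2 * Real.pi * Complex.I * (((ℓ - k).2 : ℂ))) *
            (f r * Complex.exp (-(2 * Real.pi * Complex.I *
              (((ℓ - k).1 : ℂ) * (r.1 : ℂ) + ((ℓ - k).2 : ℂ) * (r.2 : ℂ))))) :=
          Finset.sum_congr rfl hterm
      _ = ∫ r in box, ∑ k ∈ Λ, c k * (2 * Real.pi * Complex.I * (((ℓ - k).2 : ℂ))) *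
            (f r * Complex.exp (-(2 * Real.pi * Complex.I *
              (((ℓ - k).1 : ℂ) * (r.1 : ℂ) + ((ℓ - k).2 : ℂ) * (r.2 : ℂ))))) :=
          (integral_finset_sum _ (fun k _ => (hfint _ (by fun_prop)).const_mul _)).symm
      _ = ∫ r in box, -(f r * Hy r) :=
          integral_congr_ae (Filter.Eventually.of_forall hpt)
      _ = -(∫ r in box, f r * Hy r) := by rw [integral_neg]
      _ = 0 := by
          rw [hzero Hy hHyc (fun i => twoD' hhy hHyc (hopen i) (hsub i) (hvanish' i)), neg_zero]


end
end

section
/- Let μ be a trigonometric polynomial with coefficient support Λ, let Λ' ⊂ ℤ² be a finite set with Λ ⊆ Λ', and set R = |Λ' ⊖ Λ|. Suppose γ₁, …, γ_R are trigonometric polynomials with coefficient supports contained in Λ' ⊖ Λ such that the products μγ₁, …, μγ_R are orthonormal in L²([0,1]²), i.e., ∫_{[0,1]²} μ(r)γ_i(r) · conj(μ(r)γ_j(r)) dr = δ_{ij}. Then the set {r ∈ [0,1]² : μ(r) ≠ 0 and γ_i(r) = 0 for all i = 1,…,R} is finite. -/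
open MeasureTheory Set
open scoped Pointwise

noncomputable section

/-- `μ` is a (integer-frequency) trigonometric polynomial: a nonzero finite sum
`∑_{k ∈ Λ} c[k] e^{2πi k·r}`. -/
def IsTrigPolyFn (μ : ℝ × ℝ → ℂ) : Prop :=
  (∃ (Λ : Finset (ℤ × ℤ)) (c : ℤ × ℤ → ℂ), μ = trigSum Λ c) ∧ μ ≠ 0

/-- The zero set of `μ` in `[0,1]²`. -/
def zeroSetOn (μ : ℝ × ℝ → ℂ) : Set (ℝ × ℝ) := {r | r ∈ box ∧ μ r = 0}

/-- `γ` divides `μ` among trigonometric polynomials. -/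
def TrigDivides (γ μ : ℝ × ℝ → ℂ) : Prop :=
  ∃ η : ℝ × ℝ → ℂ, IsTrigPolyFn η ∧ μ = fun r => γ r * η r

/-- `C` is a trigonometric curve: the zero set in `[0,1]²` of a trigonometric polynomial,
infinite and with no isolated points. -/
def IsTrigCurve (C : Set (ℝ × ℝ)) : Prop :=
  (∃ μ : ℝ × ℝ → ℂ, IsTrigPolyFn μ ∧ C = zeroSetOn μ) ∧ C.Infinite ∧
    ∀ x ∈ C, AccPt x (Filter.principal C)

/-- `μ` is a minimal polynomial of the trigonometric curve `C`: a real-valued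
trigonometric polynomial whose zero set in `[0,1]²` is `C` and which divides every
trigonometric polynomial vanishing on `C`. -/
def IsMinPoly (μ : ℝ × ℝ → ℂ) (C : Set (ℝ × ℝ)) : Prop :=
  IsTrigPolyFn μ ∧ (∀ r, (μ r).im = 0) ∧ C = zeroSetOn μ ∧
    ∀ ν : ℝ × ℝ → ℂ, IsTrigPolyFn ν → (∀ r ∈ C, ν r = 0) → TrigDivides μ ν

/-- The contraction `Λ' ⊖ Λ = {ℓ : ℓ + k ∈ Λ' for all k ∈ Λ}` (as a finset; for
nonempty `Λ` this agrees with the set-theoretic contraction). -/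
def shrink (Λ' Λ : Finset (ℤ × ℤ)) : Finset (ℤ × ℤ) :=
  (Λ' - Λ).filter fun ℓ => ∀ k ∈ Λ, ℓ + k ∈ Λ'

lemma continuous_e2 (k : ℤ × ℤ) : Continuous (e2 k) := by
  unfold e2
  fun_prop

/-- Let `μ` be a trigonometric polynomial supported on `Λ ⊆ Λ'`, set
`R = |Λ' ⊖ Λ|`, and let `γ₁, …, γ_R` be trigonometric polynomials supported in `Λ' ⊖ Λ`
such that the products `μγᵢ` are orthonormal in `L²([0,1]²)`. Then the set
`{r ∈ [0,1]² : μ(r) ≠ 0 ∧ γᵢ(r) = 0 ∀ i}` is finite. -/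
theorem stmt10 (Λ Λ' : Finset (ℤ × ℤ)) (hΛ : Λ ⊆ Λ')
    (μ : ℝ × ℝ → ℂ) (c : ℤ × ℤ → ℂ) (hμrep : μ = trigSum Λ c) (hμ0 : μ ≠ 0)
    (R : ℕ) (hR : R = (shrink Λ' Λ).card)
    (cγ : Fin R → (ℤ × ℤ → ℂ)) (γ : Fin R → (ℝ × ℝ → ℂ))
    (hγrep : ∀ i, γ i = trigSum (shrink Λ' Λ) (cγ i))
    (hγ0 : ∀ i, γ i ≠ 0)
    (horth : ∀ i j, (∫ r in box, (μ r * γ i r) * (starRingEnd ℂ) (μ r * γ j r))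
      = if i = j then 1 else 0) :
    {r : ℝ × ℝ | r ∈ box ∧ μ r ≠ 0 ∧ ∀ i, γ i r = 0}.Finite := by
  classical
  set S := shrink Λ' Λ with hS
  obtain ⟨k₁, hk₁⟩ : Λ.Nonempty := by
    rcases Λ.eq_empty_or_nonempty with h | h
    · exact absurd (by rw [hμrep, h]; funext r; simp [trigSum]) hμ0
    · exact h
  have h0S : (0 : ℤ × ℤ) ∈ S := by
    rw [hS]
    unfold shrink
    rw [Finset.mem_filter]
    refine ⟨Finset.mem_sub.2 ⟨k₁, hΛ hk₁, k₁, hk₁, sub_self k₁⟩, ?_⟩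
    intro k hk; simpa using hΛ hk
  -- continuity facts
  have hμc : Continuous μ := by
    rw [hμrep]
    exact continuous_finset_sum _ fun k _ => continuous_const.mul (continuous_e2 k)
  have hγc : ∀ i, Continuous (γ i) := by
    intro i; rw [hγrep]
    exact continuous_finset_sum _ fun k _ => continuous_const.mul (continuous_e2 k)
  have hboxc : IsCompact box := isCompact_Icc.prod isCompact_Icc
  have hint : ∀ i j : Fin R,
      IntegrableOn (fun r => (μ r * γ i r) * (starRingEnd ℂ) (μ r * γ j r)) box := by
    intro i j
    have hc : Continuous fun r => (μ r * γ i r) * (starRingEnd ℂ) (μ r * γ j r) := by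
      simp only [starRingEnd_apply]
      exact (hμc.mul (hγc i)).mul ((hμc.mul (hγc j)).star)
    exact hc.continuousOn.integrableOn_compact hboxc
  -- the coefficient vectors
  set v : Fin R → ({x // x ∈ S} → ℂ) := fun i k => cγ i k.1 with hv
  -- key computation
  have key : ∀ (a : Fin R → ℂ) (r : ℝ × ℝ),
      ∑ i, a i * γ i r = ∑ k ∈ S.attach, (∑ i, a i * cγ i k.1) * e2 k.1 r := by
    intro a r
    have h1 : ∑ i, a i * γ i r = ∑ k ∈ S, (∑ i, a i * cγ i k) * e2 k r := by
      simp only [hγrep, trigSum, Finset.mul_sum]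
      rw [Finset.sum_comm]
      refine Finset.sum_congr rfl fun k _ => ?_
      rw [Finset.sum_mul]
      exact Finset.sum_congr rfl fun i _ => by ring
    rw [h1, ← Finset.sum_attach S (fun k => (∑ i, a i * cγ i k) * e2 k r)]
  -- linear independence of the coefficient vectors
  have hli : LinearIndependent ℂ v := by
    rw [Fintype.linearIndependent_iff]
    intro a ha
    have hz : ∀ r, ∑ i, a i * γ i r = 0 := by
      intro r
      rw [key]
      refine Finset.sum_eq_zero fun k _ => ?_
      have hk := congrFun ha k
      simp only [Finset.sum_apply, Pi.smul_apply, smul_eq_mul, Pi.zero_apply, hv] at hk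
      rw [hk, zero_mul]
    intro j
    have hzero : ∀ r : ℝ × ℝ,
        ∑ i, a i * ((μ r * γ i r) * (starRingEnd ℂ) (μ r * γ j r)) = 0 := by
      intro r
      have h2 : ∑ i, a i * ((μ r * γ i r) * (starRingEnd ℂ) (μ r * γ j r))
          = (∑ i, a i * γ i r) * (μ r * (starRingEnd ℂ) (μ r * γ j r)) := by
        rw [Finset.sum_mul]
        exact Finset.sum_congr rfl fun i _ => by ring
      rw [h2, hz r, zero_mul]
    have : (a j : ℂ) = 0 := by
      calc a j = ∑ i, a i * (if i = j then 1 else 0) := by simp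
        _ = ∑ i, a i * ∫ r in box, (μ r * γ i r) * (starRingEnd ℂ) (μ r * γ j r) := by
            refine Finset.sum_congr rfl fun i _ => ?_
            rw [horth i j]
        _ = ∑ i, ∫ r in box, a i * ((μ r * γ i r) * (starRingEnd ℂ) (μ r * γ j r)) := by
            refine Finset.sum_congr rfl fun i _ => ?_
            rw [MeasureTheory.integral_const_mul]
        _ = ∫ r in box, ∑ i, a i * ((μ r * γ i r) * (starRingEnd ℂ) (μ r * γ j r)) :=
            (MeasureTheory.integral_finset_sum _ fun i _ => (hint i j).const_mul (a i)).symm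
        _ = 0 := by simp only [hzero, MeasureTheory.integral_zero]
    exact this
  -- span
  have hcard : Fintype.card (Fin R) = Module.finrank ℂ ({x // x ∈ S} → ℂ) := by
    rw [Fintype.card_fin, Module.finrank_fintype_fun_eq_card, Fintype.card_coe, hR]
  have hspan := hli.span_eq_top_of_card_eq_finrank' hcard
  have hδ : Pi.single (⟨0, h0S⟩ : {x // x ∈ S}) (1 : ℂ) ∈ Submodule.span ℂ (Set.range v) := by
    rw [hspan]; exact Submodule.mem_top
  obtain ⟨a, ha⟩ := Submodule.mem_span_range_iff_exists_fun ℂ |>.1 hδ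
  -- the set is empty
  have hempty : {r : ℝ × ℝ | r ∈ box ∧ μ r ≠ 0 ∧ ∀ i, γ i r = 0} = ∅ := by
    ext r
    simp only [Set.mem_setOf_eq, Set.mem_empty_iff_false, iff_false, not_and]
    intro _ _ hγr
    exfalso
    have h2 : ∑ i, a i * γ i r = 0 := by
      refine Finset.sum_eq_zero fun i _ => ?_
      rw [hγr i, mul_zero]
    have h1 : ∑ i, a i * γ i r = 1 := by
      rw [key]
      have hterm : ∀ k ∈ S.attach, (∑ i, a i * cγ i k.1) * e2 k.1 r
          = (if k = (⟨0, h0S⟩ : {x // x ∈ S}) then e2 k.1 r else 0) := by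
        intro k _
        have hk := congrFun ha k
        simp only [Finset.sum_apply, Pi.smul_apply, smul_eq_mul, hv] at hk
        rw [hk, Pi.single_apply]
        split <;> simp
      rw [Finset.sum_congr rfl hterm, Finset.sum_ite_eq' S.attach]
      simp [e2]
    rw [h1] at h2
    exact one_ne_zero h2
  rw [hempty]
  exact Set.finite_empty

end
end

section
/- Let μ₁ and μ₂ be trigonometric polynomials with deg(μ₁) = (K₁, L₁) and deg(μ₂) = (K₂, L₂). If there is no trigonometric polynomial of positive degree dividing both μ₁ and μ₂, then the set of common zeros {r ∈ [0,1)² : μ₁(r) = μ₂(r) = 0} has at most (K₁ + L₁)(K₂ + L₂) elements. -/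
open MeasureTheory Set
open scoped Pointwise

noncomputable section

/-- The degree of a trigonometric polynomial given by coefficients `c` on `Λ`: the side
lengths of the smallest closed axis-aligned rectangle containing the frequency support
`{k ∈ Λ : c[k] ≠ 0}`. -/
def degOf (Λ : Finset (ℤ × ℤ)) (c : ℤ × ℤ → ℂ) : ℤ × ℤ :=
  ((WithBot.unbotD 0 ((Λ.filter fun k => c k ≠ 0).image Prod.fst).max)
      - (WithTop.untopD 0 ((Λ.filter fun k => c k ≠ 0).image Prod.fst).min),
   (WithBot.unbotD 0 ((Λ.filter fun k => c k ≠ 0).image Prod.snd).max)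
      - (WithTop.untopD 0 ((Λ.filter fun k => c k ≠ 0).image Prod.snd).min))


open Polynomial in
set_option synthInstance.maxHeartbeats 1000000 in
instance : DecompositionMonoid (Polynomial (Polynomial ℂ)) := inferInstance

namespace Stmt12
open Polynomial

variable {R : Type*} [CommRing R]

/-- Sylvester-type matrix. Row `i < n` holds coefficients of `p * X^i`;
row `n + i` (for `i < m`) holds coefficients of `q * X^i`. -/
def syl (p q : R[X]) (m n : ℕ) : Matrix (Fin (m + n)) (Fin (m + n)) R :=
  fun i j => if (i : ℕ) < n then (p * X ^ (i : ℕ)).coeff j else (q * X ^ ((i : ℕ) - n)).coeff j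

lemma syl_map {S : Type*} [CommRing S] (f : R →+* S) (p q : R[X]) (m n : ℕ) :
    (syl p q m n).map f = syl (p.map f) (q.map f) m n := by
  ext i j
  simp only [Matrix.map_apply, syl]
  split_ifs with h
  · rw [← Polynomial.coeff_map, Polynomial.map_mul, Polynomial.map_pow, map_X]
  · rw [← Polynomial.coeff_map, Polynomial.map_mul, Polynomial.map_pow, map_X]

lemma syl_det_eq_zero {p q : ℂ[X]} {m n : ℕ} (hm : p.natDegree ≤ m) (hn : q.natDegree ≤ n)
    (hmn : 0 < m + n) {w : ℂ} (hp : p.eval w = 0) (hq : q.eval w = 0) :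
    (syl p q m n).det = 0 := by
  rw [← Matrix.exists_mulVec_eq_zero_iff]
  refine ⟨fun j => w ^ (j : ℕ), ?_, ?_⟩
  · intro h0
    have := congrFun h0 ⟨0, hmn⟩
    simp at this
  · funext i
    have key : ∀ r : ℂ[X], r.natDegree < m + n → r.eval w = 0 →
        ∑ j : Fin (m + n), r.coeff j * w ^ (j : ℕ) = 0 := by
      intro r hr hre
      rw [Fin.sum_univ_eq_sum_range (fun j => r.coeff j * w ^ j), ← eval_eq_sum_range' hr, hre]
    simp only [Matrix.mulVec, dotProduct, syl, Pi.zero_apply]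
    split_ifs with h
    · refine key _ ?_ (by simp [hp])
      calc (p * X ^ (i:ℕ)).natDegree ≤ p.natDegree + (X ^ (i:ℕ) : ℂ[X]).natDegree :=
            natDegree_mul_le
        _ ≤ m + (i : ℕ) := by simp [natDegree_X_pow, hm]
        _ < m + n := by omega
    · refine key _ ?_ (by simp [hq])
      have hi : (i : ℕ) - n < m := by have := i.2; omega
      calc (q * X ^ ((i:ℕ) - n)).natDegree ≤ q.natDegree + (X ^ ((i:ℕ)-n) : ℂ[X]).natDegree :=
            natDegree_mul_le
        _ ≤ n + ((i:ℕ) - n) := by simp [natDegree_X_pow, hn]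
        _ < m + n := by omega

lemma coeff_sum_C_mul_X_pow {n : ℕ} (f : ℕ → R) (k : ℕ) :
    (∑ i ∈ Finset.range n, C (f i) * X ^ i).coeff k = if k < n then f k else 0 := by
  rw [finset_sum_coeff]
  simp only [coeff_C_mul, coeff_X_pow]
  split_ifs with h
  · rw [Finset.sum_eq_single k]
    · simp
    · intro b _ hb; simp [Ne.symm hb]
    · intro hk; exact absurd (Finset.mem_range.2 h) hk
  · apply Finset.sum_eq_zero
    intro i hi
    have : k ≠ i := by rintro rfl; exact h (Finset.mem_range.1 hi)
    simp [this]



lemma syl_det_ne_zero [IsDomain R] [DecompositionMonoid R[X]] {p q : R[X]}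
    (hp : p ≠ 0) (hrel : IsRelPrime p q) :
    (syl p q p.natDegree q.natDegree).det ≠ 0 := by
  set m := p.natDegree with hmdef
  set n := q.natDegree with hndef
  intro hdet
  obtain ⟨v, hv0, hv⟩ := Matrix.exists_vecMul_eq_zero_iff.2 hdet
  set v' : ℕ → R := fun i => if h : i < m + n then v ⟨i, h⟩ else 0 with hv'
  set A : R[X] := ∑ i ∈ Finset.range n, C (v' i) * X ^ i with hA
  set B : R[X] := ∑ i ∈ Finset.range m, C (v' (n + i)) * X ^ i with hB
  set g : ℕ → R[X] := fun i => C (v' i) * (if i < n then p * X ^ i else q * X ^ (i - n)) with hg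
  set S : R[X] := ∑ i ∈ Finset.range (m + n), g i with hS
  have hrowdeg : ∀ i, i < m + n →
      (if i < n then p * X ^ i else q * X ^ (i - n)).natDegree < m + n ∨ (m + n = 0) := by
    intro i hi
    rcases Nat.eq_zero_or_pos (m + n) with h | h
    · exact Or.inr h
    refine Or.inl ?_
    split_ifs with hif
    · calc (p * X ^ i).natDegree ≤ m + i :=
            natDegree_mul_le.trans (by simp [natDegree_X_pow, hmdef])
        _ < m + n := by omega
    · calc (q * X ^ (i-n)).natDegree ≤ n + (i - n) :=
            natDegree_mul_le.trans (by simp [natDegree_X_pow, hndef])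
        _ < m + n := by omega
  have hmn : 0 < m + n := by
    rcases Nat.eq_zero_or_pos (m + n) with h | h
    · exfalso; apply hv0; funext i; exact absurd i.2 (by omega)
    · exact h
  have hS0 : S = 0 := by
    ext j
    rw [hS, finset_sum_coeff]
    simp only [hg, coeff_C_mul, coeff_zero]
    by_cases hj : j < m + n
    · have h2 := congrFun hv ⟨j, hj⟩
      simp only [Matrix.vecMul, dotProduct, syl, Pi.zero_apply] at h2
      rw [← h2]
      refine (Fin.sum_univ_eq_sum_range
        (fun i => v' i * (if i < n then p * X ^ i else q * X ^ (i - n)).coeff j) (m+n)).symm.trans ?_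
      apply Finset.sum_congr rfl
      intro i _
      have hiv : v' (i : ℕ) = v i := by simp only [hv', dif_pos i.2, Fin.eta]
      rw [hiv, apply_ite (fun r : R[X] => r.coeff j)]
    · apply Finset.sum_eq_zero
      intro i hi
      rcases hrowdeg i (Finset.mem_range.1 hi) with h | h
      · rw [coeff_eq_zero_of_natDegree_lt (by omega), mul_zero]
      · omega
  have hSAB : S = A * p + B * q := by
    rw [hS, ← Finset.sum_filter_add_sum_filter_not (Finset.range (m+n)) (· < n) g]
    have e1 : (Finset.range (m+n)).filter (· < n) = Finset.range n := by
      ext i; simp only [Finset.mem_filter, Finset.mem_range]; omega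
    have e2 : (Finset.range (m+n)).filter (fun i => ¬ i < n) = Finset.Ico n (m+n) := by
      ext i; simp only [Finset.mem_filter, Finset.mem_range, Finset.mem_Ico]; omega
    rw [e1, e2]
    congr 1
    · rw [hA, Finset.sum_mul]
      apply Finset.sum_congr rfl
      intro i hi
      rw [hg]
      simp only [if_pos (Finset.mem_range.1 hi)]
      ring
    · rw [Finset.sum_Ico_eq_sum_range, hB, Finset.sum_mul]
      have : m + n - n = m := by omega
      rw [this]
      apply Finset.sum_congr rfl
      intro i _
      rw [hg]
      simp only [if_neg (by omega : ¬ n + i < n)]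
      have : n + i - n = i := by omega
      rw [this]
      ring
  have hABz : A * p + B * q = 0 := hSAB ▸ hS0
  by_cases hBz : B = 0
  · have hAp : A * p = 0 := by rw [hBz] at hABz; simpa using hABz
    have hAz : A = 0 := by
      rcases mul_eq_zero.1 hAp with h | h
      · exact h
      · exact absurd h hp
    apply hv0
    funext i
    have hiv : v i = v' (i : ℕ) := by simp only [hv', dif_pos i.2, Fin.eta]
    by_cases hin : (i : ℕ) < n
    · have : A.coeff i = v' i := by rw [hA, coeff_sum_C_mul_X_pow, if_pos hin]
      rw [Pi.zero_apply, hiv, ← this, hAz, coeff_zero]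
    · have h2 : B.coeff ((i:ℕ) - n) = v' (n + ((i:ℕ) - n)) := by
        rw [hB, coeff_sum_C_mul_X_pow, if_pos (by have := i.2; omega)]
      have h3 : n + ((i:ℕ) - n) = (i : ℕ) := by omega
      rw [Pi.zero_apply, hiv, ← h3, ← h2, hBz, coeff_zero]
  · have hBq : p ∣ B * q := ⟨-A, by linear_combination hABz⟩
    have hpB : p ∣ B := hrel.dvd_of_dvd_mul_right hBq
    have hm1 : 1 ≤ m := by
      by_contra h
      apply hBz
      rw [hB]
      have : m = 0 := by omega
      rw [this]
      simp
    have hndB : B.natDegree ≤ m - 1 := by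
      apply natDegree_sum_le_of_forall_le
      intro i hi
      exact (natDegree_C_mul_X_pow_le _ _).trans (by have := Finset.mem_range.1 hi; omega)
    have := natDegree_le_of_dvd hpB hBz
    omega

/-- total-degree bound for an element of `ℂ[x][y]`. -/
def tdegLE (P : (Polynomial ℂ)[X]) (d : ℕ) : Prop :=
  ∀ i j : ℕ, (P.coeff j).coeff i ≠ 0 → i + j ≤ d

lemma tdegLE.coeff_natDegree {P : (Polynomial ℂ)[X]} {d : ℕ} (h : tdegLE P d) {k : ℕ}
    (hk : P.coeff k ≠ 0) : (P.coeff k).natDegree + k ≤ d :=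
  h _ _ (by rwa [← Polynomial.leadingCoeff, Ne, Polynomial.leadingCoeff_eq_zero])

lemma tdegLE.natDegree_le {P : (Polynomial ℂ)[X]} {d : ℕ} (h : tdegLE P d) (hP : P ≠ 0) :
    P.natDegree ≤ d := by
  have h1 : P.coeff P.natDegree ≠ 0 := by
    rwa [← Polynomial.leadingCoeff, Ne, Polynomial.leadingCoeff_eq_zero]
  have := h.coeff_natDegree h1
  omega

lemma syl_det_natDegree_le (p q : (Polynomial ℂ)[X]) (m n d₁ d₂ : ℕ)
    (hm : m ≤ d₁) (hn : n ≤ d₂) (hp : tdegLE p d₁) (hq : tdegLE q d₂) :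
    (syl p q m n).det.natDegree ≤ n * d₁ + m * (d₂ - n) := by
  rw [Matrix.det_apply']
  apply natDegree_sum_le_of_forall_le
  intro σ _
  refine natDegree_mul_le.trans ?_
  rw [natDegree_intCast]
  rw [zero_add]
  by_cases hz : ∃ i, syl p q m n (σ i) i = 0
  · obtain ⟨i, hi⟩ := hz
    rw [show (∏ i : Fin (m+n), syl p q m n (σ i) i) = 0 from
      Finset.prod_eq_zero (Finset.mem_univ i) hi, natDegree_zero]
    exact Nat.zero_le _
  · push_neg at hz
    rw [natDegree_prod _ _ (fun i _ => hz i)]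
    set ρ : Fin (m + n) → ℤ := fun r =>
      if (r : ℕ) < n then (d₁ : ℤ) + (r : ℕ) else (d₂ : ℤ) + (r : ℕ) - n with hρ
    have key : ∀ r c : Fin (m + n), syl p q m n r c ≠ 0 →
        ((syl p q m n r c).natDegree : ℤ) ≤ ρ r - (c : ℕ) := by
      intro r c hrc
      rw [hρ]
      simp only [syl] at hrc ⊢
      split_ifs at hrc ⊢ with h
      · rw [coeff_mul_X_pow'] at hrc ⊢
        have h3 : (r : ℕ) ≤ (c : ℕ) := by
          by_contra hcon
          rw [if_neg hcon] at hrc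
          exact hrc rfl
        rw [if_pos h3] at hrc ⊢
        have h2 := hp.coeff_natDegree hrc
        have h2' : ((p.coeff ((c:ℕ) - (r:ℕ))).natDegree : ℤ) + (((c:ℕ) - (r:ℕ) : ℕ) : ℤ)
            ≤ (d₁ : ℤ) := by exact_mod_cast h2
        rw [Nat.cast_sub h3] at h2'
        omega
      · rw [coeff_mul_X_pow'] at hrc ⊢
        have h3 : (r : ℕ) - n ≤ (c : ℕ) := by
          by_contra hcon
          rw [if_neg hcon] at hrc
          exact hrc rfl
        have h4 : n ≤ (r : ℕ) := by omega
        rw [if_pos h3] at hrc ⊢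
        have h2 := hq.coeff_natDegree hrc
        have h2' : ((q.coeff ((c:ℕ) - ((r:ℕ) - n))).natDegree : ℤ)
            + (((c:ℕ) - ((r:ℕ) - n) : ℕ) : ℤ) ≤ (d₂ : ℤ) := by exact_mod_cast h2
        have h5 : ((r:ℕ) - n : ℕ) ≤ (c : ℕ) := h3
        rw [Nat.cast_sub h5, Nat.cast_sub h4] at h2'
        omega
    have sum_est : (∑ i, ((syl p q m n (σ i) i).natDegree : ℤ)) ≤
        ∑ i : Fin (m+n), (ρ (σ i) - (i : ℕ)) :=
      Finset.sum_le_sum fun i _ => key (σ i) i (hz i)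
    have sum_eq : ∑ i : Fin (m+n), (ρ (σ i) - (i : ℕ)) = ∑ r : Fin (m+n), (ρ r - (r : ℕ)) := by
      rw [Finset.sum_sub_distrib, Finset.sum_sub_distrib, Equiv.sum_comp σ ρ]
    have sum_val : ∑ r : Fin (m+n), (ρ r - (r : ℕ)) = n * (d₁ : ℤ) + m * ((d₂ : ℤ) - n) := by
      have step1 : ∑ r : Fin (m+n), (ρ r - (r : ℕ)) =
          ∑ r : Fin (m+n), (fun i : ℕ => if i < n then (d₁ : ℤ) else (d₂ : ℤ) - n) (r : ℕ) := by
        apply Finset.sum_congr rfl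
        intro r _
        rw [hρ]
        dsimp only
        split_ifs <;> ring
      rw [step1,
        Fin.sum_univ_eq_sum_range (fun i : ℕ => if i < n then (d₁ : ℤ) else (d₂ : ℤ) - n) (m+n),
        ← Finset.sum_filter_add_sum_filter_not (Finset.range (m+n)) (· < n)]
      have e1 : (Finset.range (m+n)).filter (· < n) = Finset.range n := by
        ext i; simp only [Finset.mem_filter, Finset.mem_range]; omega
      have e2 : (Finset.range (m+n)).filter (fun i => ¬ i < n) = Finset.Ico n (m+n) := by
        ext i; simp only [Finset.mem_filter, Finset.mem_range, Finset.mem_Ico]; omega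
      rw [e1, e2]
      have e3 : ∑ i ∈ Finset.range n, (if i < n then (d₁ : ℤ) else (d₂ : ℤ) - n) = n * d₁ := by
        rw [Finset.sum_congr rfl (fun i hi => if_pos (Finset.mem_range.1 hi)),
          Finset.sum_const, Finset.card_range, nsmul_eq_mul]
      have e4 : ∑ i ∈ Finset.Ico n (m+n), (if i < n then (d₁ : ℤ) else (d₂ : ℤ) - n)
          = m * ((d₂:ℤ) - n) := by
        rw [Finset.sum_congr rfl (fun i hi => if_neg (by
          have := Finset.mem_Ico.1 hi; omega)), Finset.sum_const, Nat.card_Ico]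
        have : m + n - n = m := by omega
        rw [this, nsmul_eq_mul]
      rw [e3, e4]
    have main := sum_est.trans (le_of_eq (sum_eq.trans sum_val))
    rw [← @Nat.cast_le ℤ]
    push_cast [Nat.cast_sub hn]
    calc (∑ i, ((syl p q m n (σ i) i).natDegree : ℤ))
        ≤ n * (d₁ : ℤ) + m * ((d₂ : ℤ) - n) := main
      _ = (n:ℤ) * d₁ + m * ((d₂:ℤ) - n) := by ring

lemma tdegLE_mono {P : (Polynomial ℂ)[X]} {d d' : ℕ} (h : tdegLE P d) (hd : d ≤ d') :
    tdegLE P d' := fun i j hij => (h i j hij).trans hd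

lemma tdegLE_zero (d : ℕ) : tdegLE 0 d := by intro i j h; simp at h

lemma tdegLE_add {P Q : (Polynomial ℂ)[X]} {d : ℕ} (h1 : tdegLE P d) (h2 : tdegLE Q d) :
    tdegLE (P + Q) d := by
  intro i j h
  have : (P.coeff j).coeff i ≠ 0 ∨ (Q.coeff j).coeff i ≠ 0 := by
    by_contra hboth
    push_neg at hboth
    rw [coeff_add, coeff_add, hboth.1, hboth.2, add_zero] at h
    exact h rfl
  rcases this with h' | h'
  · exact h1 i j h'
  · exact h2 i j h'

lemma tdegLE_sum {ι : Type*} (s : Finset ι) (f : ι → (Polynomial ℂ)[X]) (d : ℕ)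
    (h : ∀ i ∈ s, tdegLE (f i) d) : tdegLE (∑ i ∈ s, f i) d := by
  induction s using Finset.cons_induction with
  | empty => simpa using tdegLE_zero d
  | cons a s ha ih =>
    rw [Finset.sum_cons]
    exact tdegLE_add (h a (Finset.mem_cons_self a s)) (ih fun i hi => h i (Finset.mem_cons_of_mem hi))

lemma tdegLE_mul {P Q : (Polynomial ℂ)[X]} {a b : ℕ} (h1 : tdegLE P a) (h2 : tdegLE Q b) :
    tdegLE (P * Q) (a + b) := by
  intro i j h
  rw [coeff_mul, finset_sum_coeff] at h
  obtain ⟨jj, hjj, hne⟩ := Finset.exists_ne_zero_of_sum_ne_zero h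
  rw [coeff_mul] at hne
  obtain ⟨ii, hii, hne2⟩ := Finset.exists_ne_zero_of_sum_ne_zero hne
  have hP : (P.coeff jj.1).coeff ii.1 ≠ 0 := left_ne_zero_of_mul hne2
  have hQ : (Q.coeff jj.2).coeff ii.2 ≠ 0 := right_ne_zero_of_mul hne2
  have e1 := h1 _ _ hP
  have e2 := h2 _ _ hQ
  have hj := Finset.HasAntidiagonal.mem_antidiagonal.1 hjj
  have hi := Finset.HasAntidiagonal.mem_antidiagonal.1 hii
  omega

lemma tdegLE_pow {P : (Polynomial ℂ)[X]} {a : ℕ} (h : tdegLE P a) (n : ℕ) :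
    tdegLE (P ^ n) (n * a) := by
  induction n with
  | zero =>
    intro i j hij
    rw [pow_zero] at hij
    rcases Nat.eq_zero_or_pos j with rfl | hj
    · rcases Nat.eq_zero_or_pos i with rfl | hi
      · omega
      · rw [coeff_one, if_pos rfl] at hij
        rw [Polynomial.coeff_one, if_neg (by omega)] at hij
        exact absurd rfl hij
    · rw [coeff_one, if_neg (by omega)] at hij
      simp at hij
  | succ k ih =>
    rw [pow_succ]
    exact tdegLE_mono (tdegLE_mul ih h) (by ring_nf; omega)

lemma tdegLE_C (p : Polynomial ℂ) : tdegLE (C p) p.natDegree := by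
  intro i j h
  rw [coeff_C] at h
  split_ifs at h with hj
  · subst hj
    have := Polynomial.le_natDegree_of_ne_zero h
    omega
  · simp at h

lemma tdegLE_CC (c : ℂ) : tdegLE (C (C c)) 0 :=
  tdegLE_mono (tdegLE_C (C c)) (by simp)

lemma tdegLE_X : tdegLE (X : (Polynomial ℂ)[X]) 1 := by
  intro i j h
  rw [coeff_X] at h
  split_ifs at h with hj
  · subst hj
    have : i = 0 := by
      by_contra hi
      rw [Polynomial.coeff_one, if_neg (Ne.symm ?_)] at h
      · exact h rfl
      · omega
    omega
  · simp at h

lemma tdegLE_CX : tdegLE (C (X : Polynomial ℂ)) 1 :=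
  tdegLE_mono (tdegLE_C X) (by simp)

/-- evaluation of an element of `ℂ[x][y]` at a point `(z,w)`; `x ↦ z`, `y ↦ w`. -/
def evR (z w : ℂ) : (Polynomial ℂ)[X] →+* ℂ := eval₂RingHom (evalRingHom z) w

lemma evR_apply (z w : ℂ) (P : (Polynomial ℂ)[X]) :
    evR z w P = eval₂ (evalRingHom z) w P := rfl

/-- coefficient substitution `x ↦ x + t y`. -/
def ft (t : ℂ) : Polynomial ℂ →+* (Polynomial ℂ)[X] :=
  eval₂RingHom ((C : Polynomial ℂ →+* (Polynomial ℂ)[X]).comp (C : ℂ →+* Polynomial ℂ))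
    (C X + C (C t) * X)

/-- the substitution `x ↦ x + t y`, `y ↦ y` on `ℂ[x][y]`. -/
def τ (t : ℂ) : (Polynomial ℂ)[X] →+* (Polynomial ℂ)[X] := eval₂RingHom (ft t) X

lemma τ_C (t : ℂ) (a : Polynomial ℂ) : τ t (C a) = ft t a := eval₂_C _ _
lemma τ_X (t : ℂ) : τ t X = X := eval₂_X _ _
lemma ft_C (t : ℂ) (c : ℂ) : ft t (C c) = C (C c) := eval₂_C _ _
lemma ft_X (t : ℂ) : ft t X = C X + C (C t) * X := eval₂_X _ _

lemma τ_comp (t : ℂ) : (τ (-t)).comp (τ t) = RingHom.id _ := by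
  apply Polynomial.ringHom_ext
  · intro a
    simp only [RingHom.comp_apply, RingHom.id_apply, τ_C]
    have h1 : ft t a = eval₂ ((C : Polynomial ℂ →+* (Polynomial ℂ)[X]).comp
        (C : ℂ →+* Polynomial ℂ)) (C X + C (C t) * X) a := rfl
    rw [h1, hom_eval₂]
    have h2 : (τ (-t)).comp ((C : Polynomial ℂ →+* (Polynomial ℂ)[X]).comp
        (C : ℂ →+* Polynomial ℂ)) = (C : Polynomial ℂ →+* (Polynomial ℂ)[X]).comp
        (C : ℂ →+* Polynomial ℂ) := by
      apply RingHom.ext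
      intro c
      simp only [RingHom.comp_apply, τ_C, ft_C]
    have h3 : τ (-t) (C X + C (C t) * X) = C X := by
      rw [map_add, map_mul, τ_C, τ_C, τ_X, ft_X, ft_C]
      have hneg : (C (C (-t)) : (Polynomial ℂ)[X]) = - C (C t) := by rw [map_neg, map_neg]
      rw [hneg]
      ring
    rw [h2, h3]
    rw [← hom_eval₂ a (C : ℂ →+* Polynomial ℂ) (C : Polynomial ℂ →+* (Polynomial ℂ)[X]) X]
    rw [eval₂_C_X]
  · simp only [RingHom.comp_apply, RingHom.id_apply, τ_X]

lemma τ_left_inv (t : ℂ) : ∀ P, τ (-t) (τ t P) = P :=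
  fun P => RingHom.congr_fun (τ_comp t) P

lemma τ_right_inv (t : ℂ) : ∀ P, τ t (τ (-t) P) = P := by
  intro P
  have := τ_left_inv (-t) P
  rwa [neg_neg] at this

lemma τ_injective (t : ℂ) : Function.Injective (τ t) :=
  Function.LeftInverse.injective (τ_left_inv t)

lemma evR_τ (t u v : ℂ) (P : (Polynomial ℂ)[X]) :
    evR u v (τ t P) = evR (u + t * v) v P := by
  have h1 : τ t P = eval₂ (ft t) X P := rfl
  rw [h1, show evR u v (eval₂ (ft t) X P) = eval₂ ((evR u v).comp (ft t)) (evR u v X) P from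
    hom_eval₂ P (ft t) (evR u v) X]
  have h2 : (evR u v).comp (ft t) = evalRingHom (u + t * v) := by
    apply Polynomial.ringHom_ext
    · intro c
      simp only [RingHom.comp_apply, ft_C]
      show eval₂ (evalRingHom u) v (C (C c)) = _
      rw [eval₂_C]
      simp
    · simp only [RingHom.comp_apply, ft_X]
      show eval₂ (evalRingHom u) v (C X + C (C t) * X) = _
      rw [eval₂_add, eval₂_mul, eval₂_C, eval₂_C, eval₂_X]
      simp
  have h3 : evR u v X = v := eval₂_X _ _
  rw [h2, h3]
  rfl

lemma tdegLE_ft (t : ℂ) (a : Polynomial ℂ) : tdegLE (ft t a) a.natDegree := by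
  have h1 : ft t a = ∑ i ∈ a.support, C (C (a.coeff i)) * (C X + C (C t) * X) ^ i := by
    rw [show ft t a = eval₂ ((C : Polynomial ℂ →+* (Polynomial ℂ)[X]).comp
      (C : ℂ →+* Polynomial ℂ)) (C X + C (C t) * X) a from rfl, eval₂_eq_sum, Polynomial.sum_def]
    rfl
  rw [h1]
  apply tdegLE_sum
  intro i hi
  have hblk : tdegLE (C X + C (C t) * X) 1 :=
    tdegLE_add tdegLE_CX (tdegLE_mono (tdegLE_mul (tdegLE_CC t) tdegLE_X) (by omega))
  have := tdegLE_mul (tdegLE_CC (a.coeff i)) (tdegLE_pow hblk i)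
  refine tdegLE_mono this ?_
  have := Polynomial.le_natDegree_of_mem_supp i hi
  omega

lemma tdegLE_τ {P : (Polynomial ℂ)[X]} {d : ℕ} (t : ℂ) (h : tdegLE P d) :
    tdegLE (τ t P) d := by
  have h1 : τ t P = ∑ j ∈ P.support, ft t (P.coeff j) * X ^ j := by
    rw [show τ t P = eval₂ (ft t) X P from rfl, eval₂_eq_sum, Polynomial.sum_def]
  rw [h1]
  apply tdegLE_sum
  intro j hj
  have hXj : tdegLE ((X : (Polynomial ℂ)[X]) ^ j) (j * 1) := tdegLE_pow tdegLE_X j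
  have := tdegLE_mul (tdegLE_ft t (P.coeff j)) hXj
  refine tdegLE_mono this ?_
  have hne : P.coeff j ≠ 0 := Polynomial.mem_support_iff.1 hj
  have hle : (P.coeff j).natDegree + j ≤ d := by
    apply h
    rwa [← Polynomial.leadingCoeff, Ne, Polynomial.leadingCoeff_eq_zero]
  omega

/-- `e^{2πix}` -/
def ee (x : ℝ) : ℂ := Complex.exp (2 * (Real.pi : ℂ) * Complex.I * (x : ℂ))

lemma ee_ne_zero (x : ℝ) : ee x ≠ 0 := Complex.exp_ne_zero _

lemma e2_ne_zero (k : ℤ × ℤ) (r : ℝ × ℝ) : e2 k r ≠ 0 := Complex.exp_ne_zero _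

lemma e2_add (k l : ℤ × ℤ) (r : ℝ × ℝ) : e2 (k + l) r = e2 k r * e2 l r := by
  rw [e2, e2, e2, ← Complex.exp_add]
  congr 1
  simp only [Prod.fst_add, Prod.snd_add]
  push_cast
  ring

lemma e2_nn (n m : ℕ) (r : ℝ × ℝ) : e2 ((n : ℤ), (m : ℤ)) r = ee r.1 ^ n * ee r.2 ^ m := by
  rw [e2, ee, ee, ← Complex.exp_nat_mul, ← Complex.exp_nat_mul, ← Complex.exp_add]
  congr 1
  push_cast
  ring

lemma ee_injOn : Set.InjOn ee (Set.Ico (0:ℝ) 1) := by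
  intro x hx x' hx' hexp
  obtain ⟨n, hn⟩ := Complex.exp_eq_exp_iff_exists_int.1 hexp
  have h2 : (2 * (Real.pi:ℂ) * Complex.I) ≠ 0 := by
    simp [Real.pi_ne_zero, Complex.I_ne_zero]
  have h3 : 2 * (Real.pi:ℂ) * Complex.I * (x:ℂ) =
      2 * (Real.pi:ℂ) * Complex.I * ((x':ℂ) + (n:ℂ)) := by
    rw [hn]; ring
  have h4 : (x:ℂ) = (x':ℂ) + (n:ℂ) := mul_left_cancel₀ h2 h3
  have h5 : x = x' + (n : ℝ) := by exact_mod_cast h4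
  have hdiff : (n:ℝ) = x - x' := by linarith
  have hn0 : n = 0 := by
    have hb1 : (n:ℝ) < 1 := by rw [hdiff]; linarith [hx.1, hx.2, hx'.1, hx'.2]
    have hb2 : (-1:ℝ) < n := by rw [hdiff]; linarith [hx.1, hx.2, hx'.1, hx'.2]
    have c1 : n < 1 := by exact_mod_cast hb1
    have c2 : -1 < n := by exact_mod_cast hb2
    omega
  rw [hn0] at h5
  simpa using h5

def ΛOf (q : (Polynomial ℂ)[X]) (s : ℤ × ℤ) : Finset (ℤ × ℤ) :=
  q.support.biUnion fun j => (q.coeff j).support.image fun i : ℕ => (s.1 + (i:ℤ), s.2 + (j:ℤ))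

def cOf (q : (Polynomial ℂ)[X]) (s : ℤ × ℤ) : ℤ × ℤ → ℂ := fun k =>
  if s.1 ≤ k.1 ∧ s.2 ≤ k.2 then (q.coeff (k.2 - s.2).toNat).coeff ((k.1 - s.1).toNat) else 0

lemma mem_ΛOf {q : (Polynomial ℂ)[X]} {s k : ℤ × ℤ} :
    k ∈ ΛOf q s ↔ s.1 ≤ k.1 ∧ s.2 ≤ k.2 ∧
      (q.coeff (k.2 - s.2).toNat).coeff ((k.1 - s.1).toNat) ≠ 0 := by
  constructor
  · intro hk
    obtain ⟨j, hj, hk2⟩ := Finset.mem_biUnion.1 hk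
    obtain ⟨i, hi, hk3⟩ := Finset.mem_image.1 hk2
    subst hk3
    refine ⟨?_, ?_, ?_⟩
    · show s.1 ≤ s.1 + (i:ℤ)
      omega
    · show s.2 ≤ s.2 + (j:ℤ)
      omega
    · have e1 : ((s.1 + (i:ℤ), s.2 + (j:ℤ)).2 - s.2).toNat = j := by
        show (s.2 + (j:ℤ) - s.2).toNat = j
        omega
      have e2 : ((s.1 + (i:ℤ), s.2 + (j:ℤ)).1 - s.1).toNat = i := by
        show (s.1 + (i:ℤ) - s.1).toNat = i
        omega
      rw [e1, e2]
      exact Polynomial.mem_support_iff.1 hi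
  · rintro ⟨h1, h2, h3⟩
    apply Finset.mem_biUnion.2
    refine ⟨(k.2 - s.2).toNat, ?_, ?_⟩
    · rw [Polynomial.mem_support_iff]
      intro h0
      rw [h0] at h3
      simp at h3
    · apply Finset.mem_image.2
      refine ⟨(k.1 - s.1).toNat, Polynomial.mem_support_iff.2 h3, ?_⟩
      have := Int.toNat_of_nonneg (by omega : 0 ≤ k.1 - s.1)
      have := Int.toNat_of_nonneg (by omega : 0 ≤ k.2 - s.2)
      ext <;> simp <;> omega

lemma cOf_ne_zero {q : (Polynomial ℂ)[X]} {s k : ℤ × ℤ} (hk : k ∈ ΛOf q s) :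
    cOf q s k ≠ 0 := by
  obtain ⟨h1, h2, h3⟩ := mem_ΛOf.1 hk
  rw [cOf, if_pos ⟨h1, h2⟩]
  exact h3

lemma bridge (q : (Polynomial ℂ)[X]) (s : ℤ × ℤ) (r : ℝ × ℝ) :
    trigSum (ΛOf q s) (cOf q s) r = e2 s r * evR (ee r.1) (ee r.2) q := by
  have hev : evR (ee r.1) (ee r.2) q =
      ∑ j ∈ q.support, (∑ i ∈ (q.coeff j).support, (q.coeff j).coeff i * ee r.1 ^ i)
        * ee r.2 ^ j := by
    rw [show evR (ee r.1) (ee r.2) q = eval₂ (evalRingHom (ee r.1)) (ee r.2) q from rfl,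
      eval₂_eq_sum, Polynomial.sum_def]
    apply Finset.sum_congr rfl
    intro j _
    congr 1
    rw [show (evalRingHom (ee r.1)) (q.coeff j) = (q.coeff j).eval (ee r.1) from rfl,
      eval_eq_sum, Polynomial.sum_def]
  rw [hev]
  show ∑ k ∈ ΛOf q s, cOf q s k * e2 k r = _
  rw [ΛOf, Finset.sum_biUnion]
  · rw [Finset.mul_sum]
    apply Finset.sum_congr rfl
    intro j hj
    rw [Finset.sum_image]
    · rw [Finset.sum_mul, Finset.mul_sum]
      apply Finset.sum_congr rfl
      intro i hi
      have hc : cOf q s (s.1 + (i:ℤ), s.2 + (j:ℤ)) = (q.coeff j).coeff i := by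
        rw [cOf, if_pos ⟨by simp, by simp⟩]
        congr 2 <;> simp
      rw [hc]
      have he : e2 (s.1 + (i:ℤ), s.2 + (j:ℤ)) r = e2 s r * (ee r.1 ^ i * ee r.2 ^ j) := by
        have : (s.1 + (i:ℤ), s.2 + (j:ℤ)) = s + ((i:ℤ), (j:ℤ)) := by ext <;> simp
        rw [this, e2_add, e2_nn]
      rw [he]
      ring
    · intro a _ b _ hab
      simpa using hab
  · intro j1 hj1 j2 hj2 hne
    rw [Function.onFun]
    rw [Finset.disjoint_left]
    intro k hk1 hk2
    obtain ⟨i1, _, ee1⟩ := Finset.mem_image.1 hk1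
    obtain ⟨i2, _, ee2⟩ := Finset.mem_image.1 hk2
    apply hne
    have h12 : s.2 + (j1:ℤ) = s.2 + (j2:ℤ) := by
      have c1 := congrArg Prod.snd ee1
      have c2 := congrArg Prod.snd ee2
      simp only at c1 c2
      rw [c1, c2]
    have : (j1:ℤ) = j2 := by omega
    exact_mod_cast this

lemma exists_torus_ne_zero {q : (Polynomial ℂ)[X]} (hq : q ≠ 0) :
    ∃ r : ℝ × ℝ, evR (ee r.1) (ee r.2) q ≠ 0 := by
  have hinf : (ee '' (Set.Ico (0:ℝ) 1)).Infinite :=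
    (Set.infinite_image_iff ee_injOn).2 (Set.Ico_infinite (by norm_num))
  have hcoe : q.coeff q.natDegree ≠ 0 := by
    rwa [← Polynomial.leadingCoeff, Ne, Polynomial.leadingCoeff_eq_zero]
  obtain ⟨z₀, hz₀⟩ := (hinf.diff (Polynomial.finite_setOf_isRoot hcoe)).nonempty
  obtain ⟨⟨x₀, hx₀, rfl⟩, hz₀r⟩ := hz₀
  set q' : Polynomial ℂ := q.map (evalRingHom (ee x₀)) with hq'
  have hq'0 : q' ≠ 0 := by
    intro h0
    apply hz₀r
    have : q'.coeff q.natDegree = 0 := by rw [h0]; simp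
    rw [hq', Polynomial.coeff_map] at this
    exact this
  obtain ⟨w₀, hw₀⟩ := (hinf.diff (Polynomial.finite_setOf_isRoot hq'0)).nonempty
  obtain ⟨⟨y₀, hy₀, rfl⟩, hw₀r⟩ := hw₀
  refine ⟨(x₀, y₀), ?_⟩
  have : evR (ee x₀) (ee y₀) q = q'.eval (ee y₀) := by
    rw [hq', Polynomial.eval_map]
    rfl
  rw [this]
  exact hw₀r


section Construct



variable (Λ : Finset (ℤ × ℤ)) (c : ℤ × ℤ → ℂ)

def Ff : Finset (ℤ × ℤ) := Λ.filter (fun k => c k ≠ 0)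

variable (h : (Ff Λ c).Nonempty)

def aF : ℤ := ((Ff Λ c).image Prod.fst).min' (h.image _)
def bF : ℤ := ((Ff Λ c).image Prod.snd).min' (h.image _)
def AX : ℤ := ((Ff Λ c).image Prod.fst).max' (h.image _)
def BY : ℤ := ((Ff Λ c).image Prod.snd).max' (h.image _)

def Pof : (Polynomial ℂ)[X] :=
  ∑ k ∈ Ff Λ c, C (C (c k) * X ^ (k.1 - aF Λ c h).toNat) * X ^ (k.2 - bF Λ c h).toNat

lemma aF_le {k : ℤ × ℤ} (hk : k ∈ Ff Λ c) : aF Λ c h ≤ k.1 :=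
  Finset.min'_le _ _ (Finset.mem_image_of_mem _ hk)
lemma bF_le {k : ℤ × ℤ} (hk : k ∈ Ff Λ c) : bF Λ c h ≤ k.2 :=
  Finset.min'_le _ _ (Finset.mem_image_of_mem _ hk)
lemma le_AX {k : ℤ × ℤ} (hk : k ∈ Ff Λ c) : k.1 ≤ AX Λ c h :=
  Finset.le_max' _ _ (Finset.mem_image_of_mem _ hk)
lemma le_BY {k : ℤ × ℤ} (hk : k ∈ Ff Λ c) : k.2 ≤ BY Λ c h :=
  Finset.le_max' _ _ (Finset.mem_image_of_mem _ hk)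

lemma trigSum_filter : trigSum Λ c = trigSum (Ff Λ c) c := by
  funext r
  rw [trigSum, trigSum, Ff]
  rw [Finset.sum_filter_of_ne]
  intro k _ hne
  intro hc
  apply hne
  rw [hc, zero_mul]

lemma mu_eq (r : ℝ × ℝ) :
    trigSum Λ c r = e2 (aF Λ c h, bF Λ c h) r * evR (ee r.1) (ee r.2) (Pof Λ c h) := by
  rw [trigSum_filter, trigSum, Pof, map_sum]
  rw [Finset.mul_sum]
  apply Finset.sum_congr rfl
  intro k hk
  have hev : evR (ee r.1) (ee r.2)
      (C (C (c k) * X ^ (k.1 - aF Λ c h).toNat) * X ^ (k.2 - bF Λ c h).toNat) =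
      c k * ee r.1 ^ (k.1 - aF Λ c h).toNat * ee r.2 ^ (k.2 - bF Λ c h).toNat := by
    rw [map_mul, map_pow]
    have h1 : evR (ee r.1) (ee r.2) (C (C (c k) * X ^ (k.1 - aF Λ c h).toNat)) =
        (C (c k) * X ^ (k.1 - aF Λ c h).toNat).eval (ee r.1) := eval₂_C _ _
    have h2 : evR (ee r.1) (ee r.2) (X : (Polynomial ℂ)[X]) = ee r.2 := eval₂_X _ _
    rw [h1, h2, eval_mul, eval_C, eval_pow, eval_X]
  rw [hev]
  have hsplit : k = ((aF Λ c h, bF Λ c h) : ℤ × ℤ) +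
      (((k.1 - aF Λ c h).toNat : ℤ), ((k.2 - bF Λ c h).toNat : ℤ)) := by
    have h1 := aF_le Λ c h hk
    have h2 := bF_le Λ c h hk
    ext
    · show k.1 = aF Λ c h + ((k.1 - aF Λ c h).toNat : ℤ)
      omega
    · show k.2 = bF Λ c h + ((k.2 - bF Λ c h).toNat : ℤ)
      omega
  calc c k * e2 k r = c k * e2 ((aF Λ c h, bF Λ c h) +
        (((k.1 - aF Λ c h).toNat : ℤ), ((k.2 - bF Λ c h).toNat : ℤ))) r := by rw [← hsplit]
    _ = c k * (e2 (aF Λ c h, bF Λ c h) r *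
        (ee r.1 ^ (k.1 - aF Λ c h).toNat * ee r.2 ^ (k.2 - bF Λ c h).toNat)) := by
        rw [e2_add, e2_nn]
    _ = _ := by ring

lemma coeffP {k₀ : ℤ × ℤ} (hk₀ : k₀ ∈ Ff Λ c) :
    ((Pof Λ c h).coeff (k₀.2 - bF Λ c h).toNat).coeff (k₀.1 - aF Λ c h).toNat = c k₀ := by
  rw [Pof, finset_sum_coeff]
  have hcoeff : ∀ k ∈ Ff Λ c,
      (C (C (c k) * X ^ (k.1 - aF Λ c h).toNat) * X ^ (k.2 - bF Λ c h).toNat).coeff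
        (k₀.2 - bF Λ c h).toNat =
      if (k₀.2 - bF Λ c h).toNat = (k.2 - bF Λ c h).toNat
        then C (c k) * X ^ (k.1 - aF Λ c h).toNat else 0 := by
    intro k _
    rw [coeff_C_mul_X_pow]
  rw [Finset.sum_congr rfl hcoeff, finset_sum_coeff]
  rw [Finset.sum_eq_single k₀]
  · rw [if_pos rfl, coeff_C_mul_X_pow, if_pos rfl]
  · intro k hk hne
    split_ifs with h1
    · rw [coeff_C_mul_X_pow]
      split_ifs with h2
      · exfalso
        apply hne
        have ha1 := aF_le Λ c h hk
        have ha2 := aF_le Λ c h hk₀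
        have hb1 := bF_le Λ c h hk
        have hb2 := bF_le Λ c h hk₀
        have : k.1 = k₀.1 := by omega
        have : k.2 = k₀.2 := by omega
        ext <;> omega
      · rfl
    · rw [coeff_zero]
  · intro habs
    exact absurd hk₀ habs

lemma Pof_ne_zero : Pof Λ c h ≠ 0 := by
  have hh := h
  obtain ⟨k₀, hk₀⟩ := hh
  intro h0
  have := coeffP Λ c h hk₀
  rw [h0] at this
  simp only [coeff_zero] at this
  exact (Finset.mem_filter.1 hk₀).2 this.symm

lemma X_not_dvd : ¬ ((X : (Polynomial ℂ)[X]) ∣ Pof Λ c h) := by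
  intro hdvd
  rw [Polynomial.X_dvd_iff] at hdvd
  obtain ⟨k₀, hk₀mem, hk₀⟩ : ∃ k₀ ∈ Ff Λ c, k₀.2 = bF Λ c h := by
    have := Finset.min'_mem ((Ff Λ c).image Prod.snd) (h.image _)
    obtain ⟨k₀, hmem, heq⟩ := Finset.mem_image.1 this
    exact ⟨k₀, hmem, heq⟩
  have := coeffP Λ c h hk₀mem
  rw [show (k₀.2 - bF Λ c h).toNat = 0 by omega] at this
  rw [hdvd] at this
  simp only [coeff_zero] at this
  exact (Finset.mem_filter.1 hk₀mem).2 this.symm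

lemma CX_not_dvd : ¬ ((C (X : Polynomial ℂ)) ∣ Pof Λ c h) := by
  intro hdvd
  rw [Polynomial.C_dvd_iff_dvd_coeff] at hdvd
  obtain ⟨k₀, hk₀mem, hk₀⟩ : ∃ k₀ ∈ Ff Λ c, k₀.1 = aF Λ c h := by
    have := Finset.min'_mem ((Ff Λ c).image Prod.fst) (h.image _)
    obtain ⟨k₀, hmem, heq⟩ := Finset.mem_image.1 this
    exact ⟨k₀, hmem, heq⟩
  have h2 := hdvd ((k₀.2 - bF Λ c h).toNat)
  rw [Polynomial.X_dvd_iff] at h2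
  have := coeffP Λ c h hk₀mem
  rw [show (k₀.1 - aF Λ c h).toNat = 0 by omega] at this
  rw [h2] at this
  exact (Finset.mem_filter.1 hk₀mem).2 this.symm

lemma tdeg_Pof : tdegLE (Pof Λ c h)
    ((AX Λ c h - aF Λ c h).toNat + (BY Λ c h - bF Λ c h).toNat) := by
  rw [Pof]
  apply tdegLE_sum
  intro k hk
  have h1 : tdegLE (C (C (c k) * X ^ (k.1 - aF Λ c h).toNat)) ((k.1 - aF Λ c h).toNat) :=
    tdegLE_mono (tdegLE_C _) (natDegree_C_mul_X_pow_le _ _)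
  have h2 : tdegLE ((X : (Polynomial ℂ)[X]) ^ (k.2 - bF Λ c h).toNat)
      ((k.2 - bF Λ c h).toNat * 1) := tdegLE_pow tdegLE_X _
  refine tdegLE_mono (tdegLE_mul h1 h2) ?_
  have ha := aF_le Λ c h hk
  have hA := le_AX Λ c h hk
  have hb := bF_le Λ c h hk
  have hB := le_BY Λ c h hk
  have e1 : (k.1 - aF Λ c h).toNat ≤ (AX Λ c h - aF Λ c h).toNat := by omega
  have e2 : (k.2 - bF Λ c h).toNat ≤ (BY Λ c h - bF Λ c h).toNat := by omega
  omega

lemma degOf_eq : degOf Λ c = (AX Λ c h - aF Λ c h, BY Λ c h - bF Λ c h) := by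
  rw [degOf]
  have h1 : ((Ff Λ c).image Prod.fst).max = ((AX Λ c h : ℤ) : WithBot ℤ) :=
    (Finset.coe_max' _).symm
  have h2 : ((Ff Λ c).image Prod.fst).min = ((aF Λ c h : ℤ) : WithTop ℤ) :=
    (Finset.coe_min' _).symm
  have h3 : ((Ff Λ c).image Prod.snd).max = ((BY Λ c h : ℤ) : WithBot ℤ) :=
    (Finset.coe_max' _).symm
  have h4 : ((Ff Λ c).image Prod.snd).min = ((bF Λ c h : ℤ) : WithTop ℤ) :=
    (Finset.coe_min' _).symm
  rw [show (Λ.filter fun k => c k ≠ 0) = Ff Λ c from rfl]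
  rw [h1, h2, h3, h4]
  rfl

end Construct

/-- two distinct support points give positive degree -/
lemma degOf_ne_zero {Λγ : Finset (ℤ × ℤ)} {cγ : ℤ × ℤ → ℂ}
    (hall : ∀ k ∈ Λγ, cγ k ≠ 0) {k k' : ℤ × ℤ} (hk : k ∈ Λγ) (hk' : k' ∈ Λγ)
    (hne : k ≠ k') : degOf Λγ cγ ≠ (0, 0) := by
  have hfil : Λγ.filter (fun k => cγ k ≠ 0) = Λγ := Finset.filter_true_of_mem hall
  have hFf : (Ff Λγ cγ) = Λγ := hfil
  have hk1 : k ∈ Ff Λγ cγ := by rw [hFf]; exact hk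
  have hk'1 : k' ∈ Ff Λγ cγ := by rw [hFf]; exact hk'
  have hne2 : (Ff Λγ cγ).Nonempty := ⟨k, hk1⟩
  rw [degOf_eq Λγ cγ hne2]
  intro heq
  have e1 : AX Λγ cγ hne2 - aF Λγ cγ hne2 = 0 := by
    have := congrArg Prod.fst heq; exact this
  have e2 : BY Λγ cγ hne2 - bF Λγ cγ hne2 = 0 := by
    have := congrArg Prod.snd heq; exact this
  have p1 := aF_le Λγ cγ hne2 hk1
  have p2 := le_AX Λγ cγ hne2 hk1
  have p3 := bF_le Λγ cγ hne2 hk1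
  have p4 := le_BY Λγ cγ hne2 hk1
  have q1 := aF_le Λγ cγ hne2 hk'1
  have q2 := le_AX Λγ cγ hne2 hk'1
  have q3 := bF_le Λγ cγ hne2 hk'1
  have q4 := le_BY Λγ cγ hne2 hk'1
  apply hne
  ext <;> omega


lemma aF_le_AX (Λ : Finset (ℤ × ℤ)) (c : ℤ × ℤ → ℂ) (h : (Ff Λ c).Nonempty) :
    aF Λ c h ≤ AX Λ c h :=
  Finset.min'_le _ _ (Finset.max'_mem _ _)

lemma bF_le_BY (Λ : Finset (ℤ × ℤ)) (c : ℤ × ℤ → ℂ) (h : (Ff Λ c).Nonempty) :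
    bF Λ c h ≤ BY Λ c h :=
  Finset.min'_le _ _ (Finset.max'_mem _ _)

lemma evR_eq_eval_map (z w : ℂ) (P : (Polynomial ℂ)[X]) :
    evR z w P = (P.map (evalRingHom z)).eval w := by
  rw [Polynomial.eval_map]; rfl

lemma map_eval_eq_zero_dvd {P : (Polynomial ℂ)[X]} {z₀ : ℂ}
    (h : P.map (evalRingHom z₀) = 0) : C (X - C z₀) ∣ P := by
  rw [Polynomial.C_dvd_iff_dvd_coeff]
  intro j
  rw [Polynomial.dvd_iff_isRoot]
  have := congrArg (fun q : Polynomial ℂ => q.coeff j) h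
  simpa [Polynomial.coeff_map] using this

lemma not_unit_CXC (z₀ : ℂ) : ¬ IsUnit (C (X - C z₀) : (Polynomial ℂ)[X]) := by
  rw [Polynomial.isUnit_C]
  exact Polynomial.not_isUnit_X_sub_C z₀

/-- common zero set -/
def Zs (P₁ P₂ : (Polynomial ℂ)[X]) : Set (ℂ × ℂ) :=
  {p : ℂ × ℂ | evR p.1 p.2 P₁ = 0 ∧ evR p.1 p.2 P₂ = 0}

lemma zs_empty_of_deg_zero {P₁ P₂ : (Polynomial ℂ)[X]} (hrel : IsRelPrime P₁ P₂)
    (h₁ : P₁.natDegree = 0) (h₂ : P₂.natDegree = 0) : Zs P₁ P₂ = ∅ := by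
  obtain ⟨p, hp⟩ := Polynomial.natDegree_eq_zero.1 h₁
  obtain ⟨q, hq⟩ := Polynomial.natDegree_eq_zero.1 h₂
  rw [Set.eq_empty_iff_forall_notMem]
  rintro ⟨z, w⟩ ⟨e1, e2⟩
  rw [← hp] at e1
  rw [← hq] at e2
  have he1 : p.eval z = 0 := by
    have : evR z w (C p) = p.eval z := eval₂_C _ _
    rw [this] at e1; exact e1
  have he2 : q.eval z = 0 := by
    have : evR z w (C q) = q.eval z := eval₂_C _ _
    rw [this] at e2; exact e2
  have d1 : (X - C z) ∣ p := Polynomial.dvd_iff_isRoot.2 he1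
  have d2 : (X - C z) ∣ q := Polynomial.dvd_iff_isRoot.2 he2
  have DD1 : C (X - C z) ∣ P₁ := by rw [← hp]; exact map_dvd (C : Polynomial ℂ →+* (Polynomial ℂ)[X]) d1
  have DD2 : C (X - C z) ∣ P₂ := by rw [← hq]; exact map_dvd (C : Polynomial ℂ →+* (Polynomial ℂ)[X]) d2
  exact not_unit_CXC z (hrel DD1 DD2)

lemma zs_finite {P₁ P₂ : (Polynomial ℂ)[X]} (hP₁ : P₁ ≠ 0) (hrel : IsRelPrime P₁ P₂) :
    (Zs P₁ P₂).Finite := by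
  by_cases hdeg : P₁.natDegree = 0 ∧ P₂.natDegree = 0
  · rw [zs_empty_of_deg_zero hrel hdeg.1 hdeg.2]
    exact Set.finite_empty
  · have hmn : 0 < P₁.natDegree + P₂.natDegree := by omega
    set R₀ := (syl P₁ P₂ P₁.natDegree P₂.natDegree).det with hR₀def
    have hR₀ : R₀ ≠ 0 := syl_det_ne_zero hP₁ hrel
    have hsub : Zs P₁ P₂ ⊆ ⋃ z₀ ∈ (R₀.roots.toFinset : Set ℂ),
        ({z₀} : Set ℂ) ×ˢ {w : ℂ | (P₁.map (evalRingHom z₀)).eval w = 0 ∧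
          (P₂.map (evalRingHom z₀)).eval w = 0} := by
      rintro ⟨z, w⟩ ⟨e1, e2⟩
      have hev1 : (P₁.map (evalRingHom z)).eval w = 0 := by rw [← evR_eq_eval_map]; exact e1
      have hev2 : (P₂.map (evalRingHom z)).eval w = 0 := by rw [← evR_eq_eval_map]; exact e2
      have hroot : R₀.eval z = 0 := by
        have h1 : R₀.eval z = (evalRingHom z) R₀ := rfl
        rw [h1, hR₀def, RingHom.map_det, RingHom.mapMatrix_apply, syl_map]
        exact syl_det_eq_zero natDegree_map_le natDegree_map_le hmn hev1 hev2
      apply Set.mem_biUnion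
      · show z ∈ (R₀.roots.toFinset : Set ℂ)
        simp only [Finset.coe_sort_coe, Multiset.mem_toFinset, Finset.mem_coe]
        exact (Polynomial.mem_roots hR₀).2 hroot
      · exact ⟨rfl, hev1, hev2⟩
    apply Set.Finite.subset _ hsub
    apply Set.Finite.biUnion (R₀.roots.toFinset.finite_toSet)
    intro z₀ _
    apply Set.Finite.prod (Set.finite_singleton _)
    by_cases hz : P₁.map (evalRingHom z₀) = 0
    · by_cases hz2 : P₂.map (evalRingHom z₀) = 0
      · exfalso
        exact not_unit_CXC z₀ (hrel (map_eval_eq_zero_dvd hz) (map_eval_eq_zero_dvd hz2))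
      · apply Set.Finite.subset (Polynomial.finite_setOf_isRoot hz2)
        intro w hw
        exact hw.2
    · apply Set.Finite.subset (Polynomial.finite_setOf_isRoot hz)
      intro w hw
      exact hw.1

lemma zs_card {P₁ P₂ : (Polynomial ℂ)[X]} {d₁ d₂ : ℕ} (hP₁ : P₁ ≠ 0) (hP₂ : P₂ ≠ 0)
    (ht₁ : tdegLE P₁ d₁) (ht₂ : tdegLE P₂ d₂) (hrel : IsRelPrime P₁ P₂) :
    (Zs P₁ P₂).Finite ∧ (Zs P₁ P₂).ncard ≤ d₁ * d₂ := by
  have hfin := zs_finite hP₁ hrel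
  refine ⟨hfin, ?_⟩
  -- choose a good direction t
  set bad : Set ℂ := (fun pq : (ℂ × ℂ) × (ℂ × ℂ) => (pq.1.1 - pq.2.1) / (pq.1.2 - pq.2.2)) ''
    ((Zs P₁ P₂) ×ˢ (Zs P₁ P₂)) with hbad
  have hbadfin : bad.Finite := (hfin.prod hfin).image _
  obtain ⟨t, ht⟩ := hbadfin.exists_notMem
  set Q₁ := τ t P₁ with hQ₁
  set Q₂ := τ t P₂ with hQ₂
  have hQ₁0 : Q₁ ≠ 0 := by
    intro h0
    apply hP₁
    have h1 : τ (-t) Q₁ = P₁ := τ_left_inv t P₁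
    rw [h0, map_zero] at h1
    exact h1.symm
  have hQ₂0 : Q₂ ≠ 0 := by
    intro h0
    apply hP₂
    have h1 : τ (-t) Q₂ = P₂ := τ_left_inv t P₂
    rw [h0, map_zero] at h1
    exact h1.symm
  have hrelQ : IsRelPrime Q₁ Q₂ := by
    intro g hg1 hg2
    have d1 : τ (-t) g ∣ P₁ := by
      have := map_dvd (τ (-t)) hg1
      rwa [hQ₁, τ_left_inv t P₁] at this
    have d2 : τ (-t) g ∣ P₂ := by
      have := map_dvd (τ (-t)) hg2
      rwa [hQ₂, τ_left_inv t P₂] at this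
    have hu := hrel d1 d2
    have : g = τ t (τ (-t) g) := (τ_right_inv t g).symm
    rw [this]
    exact hu.map _
  have htQ₁ : tdegLE Q₁ d₁ := tdegLE_τ t ht₁
  have htQ₂ : tdegLE Q₂ d₂ := tdegLE_τ t ht₂
  have hm₁ : Q₁.natDegree ≤ d₁ := htQ₁.natDegree_le hQ₁0
  have hm₂ : Q₂.natDegree ≤ d₂ := htQ₂.natDegree_le hQ₂0
  -- evaluation of transformed polynomials at shifted points
  have hev : ∀ (P : (Polynomial ℂ)[X]) (p : ℂ × ℂ),
      evR (p.1 - t * p.2) p.2 (τ t P) = evR p.1 p.2 P := by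
    intro P p
    rw [evR_τ]
    congr 1
    ring
  by_cases hdeg0 : Q₁.natDegree = 0 ∧ Q₂.natDegree = 0
  · -- then the common zero set is empty
    have : Zs P₁ P₂ = ∅ := by
      rw [Set.eq_empty_iff_forall_notMem]
      rintro p ⟨e1, e2⟩
      have hz := zs_empty_of_deg_zero hrelQ hdeg0.1 hdeg0.2
      have : (p.1 - t * p.2, p.2) ∈ Zs Q₁ Q₂ := by
        constructor
        · show evR (p.1 - t*p.2) p.2 Q₁ = 0
          rw [hQ₁, hev P₁ p]; exact e1
        · show evR (p.1 - t*p.2) p.2 Q₂ = 0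
          rw [hQ₂, hev P₂ p]; exact e2
      rw [hz] at this
      exact this
    rw [this]
    simp
  · have hmn : 0 < Q₁.natDegree + Q₂.natDegree := by omega
    set R := (syl Q₁ Q₂ Q₁.natDegree Q₂.natDegree).det with hRdef
    have hR : R ≠ 0 := syl_det_ne_zero hQ₁0 hrelQ
    have hRdeg : R.natDegree ≤ d₁ * d₂ := by
      have h1 := syl_det_natDegree_le Q₁ Q₂ Q₁.natDegree Q₂.natDegree d₁ d₂ hm₁ hm₂ htQ₁ htQ₂
      refine h1.trans ?_
      have h2 : Q₁.natDegree * (d₂ - Q₂.natDegree) ≤ d₁ * (d₂ - Q₂.natDegree) :=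
        Nat.mul_le_mul_right _ hm₁
      have h3 : Q₂.natDegree * d₁ + d₁ * (d₂ - Q₂.natDegree) = d₁ * d₂ := by
        rw [Nat.mul_comm (Q₂.natDegree) d₁, ← Nat.mul_add d₁]
        congr 1
        omega
      omega
    set ψ : ℂ × ℂ → ℂ := fun p => p.1 - t * p.2 with hψ
    have hmaps : ∀ p ∈ Zs P₁ P₂, ψ p ∈ (R.roots.toFinset : Set ℂ) := by
      rintro p ⟨e1, e2⟩
      have hroot : R.eval (ψ p) = 0 := by
        have h1 : R.eval (ψ p) = (evalRingHom (ψ p)) R := rfl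
        rw [h1, hRdef, RingHom.map_det, RingHom.mapMatrix_apply, syl_map]
        apply syl_det_eq_zero natDegree_map_le natDegree_map_le hmn (w := p.2)
        · rw [← evR_eq_eval_map, hQ₁, hψ, hev P₁ p]; exact e1
        · rw [← evR_eq_eval_map, hQ₂, hψ, hev P₂ p]; exact e2
      simp only [Multiset.mem_toFinset, Finset.mem_coe]
      exact (Polynomial.mem_roots hR).2 hroot
    have hinj : Set.InjOn ψ (Zs P₁ P₂) := by
      intro p hp p' hp' heq
      by_cases h2 : p.2 = p'.2
      · have : p.1 = p'.1 := by
          rw [hψ] at heq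
          simp only at heq
          rw [h2] at heq
          linear_combination heq
        exact Prod.ext this h2
      · exfalso
        apply ht
        have hsub : p.2 - p'.2 ≠ 0 := fun h0 => h2 (by linear_combination h0)
        have : t = (p.1 - p'.1) / (p.2 - p'.2) := by
          rw [eq_div_iff hsub]
          rw [hψ] at heq
          simp only at heq
          linear_combination -heq
        show t ∈ bad
        rw [hbad]
        refine ⟨(p, p'), Set.mk_mem_prod hp hp', ?_⟩
        simp only
        rw [← this]
    calc (Zs P₁ P₂).ncard = (ψ '' Zs P₁ P₂).ncard := (Set.ncard_image_of_injOn hinj).symm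
      _ ≤ (R.roots.toFinset : Set ℂ).ncard := by
          apply Set.ncard_le_ncard _ (R.roots.toFinset.finite_toSet)
          rintro x ⟨p, hp, rfl⟩
          exact hmaps p hp
      _ = R.roots.toFinset.card := Set.ncard_coe_finset _
      _ ≤ R.natDegree := (Multiset.toFinset_card_le _).trans (Polynomial.card_roots' R)
      _ ≤ d₁ * d₂ := hRdeg


lemma e2_zero (r : ℝ × ℝ) : e2 (0, 0) r = 1 := by
  rw [e2]
  norm_num

lemma Ff_nonempty {Λ : Finset (ℤ × ℤ)} {c : ℤ × ℤ → ℂ} (h : trigSum Λ c ≠ 0) :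
    (Ff Λ c).Nonempty := by
  rw [Finset.nonempty_iff_ne_empty]
  intro h0
  apply h
  rw [trigSum_filter, h0]
  funext r
  simp [trigSum]

lemma unit_or_dvd_or_two {d : (Polynomial ℂ)[X]} (hd : d ≠ 0) :
    IsUnit d ∨ ((X : (Polynomial ℂ)[X]) ∣ d) ∨ ((C (X : Polynomial ℂ)) ∣ d) ∨
      ∃ k k' : ℤ × ℤ, k ∈ ΛOf d (0,0) ∧ k' ∈ ΛOf d (0,0) ∧ k ≠ k' := by
  have memnn : ∀ (i j : ℕ), (((i:ℤ), (j:ℤ)) ∈ ΛOf d (0,0)) ↔ (d.coeff j).coeff i ≠ 0 := by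
    intro i j
    rw [mem_ΛOf]
    constructor
    · rintro ⟨-, -, h3⟩
      simpa using h3
    · intro hne
      refine ⟨by simp, by simp, by simpa using hne⟩
  by_cases hcard : 1 < (ΛOf d (0,0)).card
  · obtain ⟨a, ha, b, hb, hab⟩ := Finset.one_lt_card.1 hcard
    exact Or.inr (Or.inr (Or.inr ⟨a, b, ha, hb, hab⟩))
  · -- exactly one element
    have hne : (ΛOf d (0,0)).Nonempty := by
      have hlc : d.coeff d.natDegree ≠ 0 := by
        rwa [← Polynomial.leadingCoeff, Ne, Polynomial.leadingCoeff_eq_zero]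
      have hlc2 : (d.coeff d.natDegree).coeff (d.coeff d.natDegree).natDegree ≠ 0 := by
        rwa [← Polynomial.leadingCoeff, Ne, Polynomial.leadingCoeff_eq_zero]
      exact ⟨_, (memnn _ _).2 hlc2⟩
    have hcard1 : (ΛOf d (0,0)).card = 1 := by
      have := Finset.Nonempty.card_pos hne
      omega
    obtain ⟨pt, hpt⟩ := Finset.card_eq_one.1 hcard1
    have key : ∀ i j : ℕ, (d.coeff j).coeff i ≠ 0 → ((i:ℤ), (j:ℤ)) = pt := by
      intro i j hij
      have := (memnn i j).2 hij
      rw [hpt] at this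
      exact Finset.mem_singleton.1 this
    have hptmem : pt ∈ ΛOf d (0,0) := by rw [hpt]; exact Finset.mem_singleton_self pt
    have hpt1 : 0 ≤ pt.1 := (mem_ΛOf.1 hptmem).1
    have hpt2 : 0 ≤ pt.2 := (mem_ΛOf.1 hptmem).2.1
    rcases lt_or_eq_of_le hpt2 with h2 | h2
    · -- pt.2 > 0 : X ∣ d
      refine Or.inr (Or.inl ?_)
      rw [Polynomial.X_dvd_iff]
      ext i
      rw [Polynomial.coeff_zero]
      by_contra hco
      have := key i 0 hco
      rw [← this] at h2
      simp at h2
    rcases lt_or_eq_of_le hpt1 with h1 | h1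
    · -- pt.1 > 0 : C X ∣ d
      refine Or.inr (Or.inr (Or.inl ?_))
      rw [Polynomial.C_dvd_iff_dvd_coeff]
      intro j
      rw [Polynomial.X_dvd_iff]
      by_contra hco
      have := key 0 j hco
      rw [← this] at h1
      simp at h1
    · -- pt = (0,0) : unit
      left
      set α : ℂ := (d.coeff 0).coeff 0 with hα
      have hdc : d = C (C α) := by
        refine Polynomial.ext fun j => ?_
        rw [Polynomial.coeff_C]
        split_ifs with hj
        · subst hj
          refine Polynomial.ext fun i => ?_
          rw [Polynomial.coeff_C]
          split_ifs with hi
          · subst hi; rfl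
          · by_contra hco
            have := key i 0 (by simpa using hco)
            rw [← this] at h1
            simp only [Prod.fst] at h1
            exact hi (by exact_mod_cast h1.symm)
        · refine Polynomial.ext fun i => ?_
          rw [Polynomial.coeff_zero]
          by_contra hco
          have := key i j hco
          rw [← this] at h2
          simp only [Prod.snd] at h2
          exact hj (by exact_mod_cast h2.symm)
      have hα0 : α ≠ 0 := by
        intro h0
        apply hd
        rw [hdc, h0]
        simp
      rw [hdc]
      exact Polynomial.isUnit_C.2 (Polynomial.isUnit_C.2 (isUnit_iff_ne_zero.2 hα0))

lemma relprime_of_coprime (Λ₁ Λ₂ : Finset (ℤ × ℤ)) (c₁ c₂ : ℤ × ℤ → ℂ)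
    (h₁ : (Ff Λ₁ c₁).Nonempty) (h₂ : (Ff Λ₂ c₂).Nonempty)
    (hcoprime : ¬ ∃ (Λγ : Finset (ℤ × ℤ)) (cγ : ℤ × ℤ → ℂ),
      trigSum Λγ cγ ≠ 0 ∧ degOf Λγ cγ ≠ (0, 0) ∧
      TrigDivides (trigSum Λγ cγ) (trigSum Λ₁ c₁) ∧
      TrigDivides (trigSum Λγ cγ) (trigSum Λ₂ c₂)) :
    IsRelPrime (Pof Λ₁ c₁ h₁) (Pof Λ₂ c₂ h₂) := by
  intro d hd1 hd2
  by_contra hdu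
  have hd0 : d ≠ 0 := by
    rintro rfl
    obtain ⟨e, he⟩ := hd1
    exact Pof_ne_zero Λ₁ c₁ h₁ (by rw [he, zero_mul])
  rcases unit_or_dvd_or_two hd0 with h | h | h | ⟨k, k', hk, hk', hkk⟩
  · exact hdu h
  · exact X_not_dvd Λ₁ c₁ h₁ (dvd_trans h hd1)
  · exact CX_not_dvd Λ₁ c₁ h₁ (dvd_trans h hd1)
  · apply hcoprime
    obtain ⟨e₁, he₁⟩ := hd1
    obtain ⟨e₂, he₂⟩ := hd2
    have he₁0 : e₁ ≠ 0 := by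
      rintro rfl
      exact Pof_ne_zero Λ₁ c₁ h₁ (by rw [he₁, mul_zero])
    have he₂0 : e₂ ≠ 0 := by
      rintro rfl
      exact Pof_ne_zero Λ₂ c₂ h₂ (by rw [he₂, mul_zero])
    refine ⟨ΛOf d (0,0), cOf d (0,0), ?_, ?_, ?_, ?_⟩
    · -- γ ≠ 0
      obtain ⟨r, hr⟩ := exists_torus_ne_zero hd0
      intro h0
      have := bridge d (0,0) r
      rw [h0] at this
      simp only [Pi.zero_apply] at this
      rw [e2_zero, one_mul] at this
      exact hr this.symm
    · exact degOf_ne_zero (fun k hk => cOf_ne_zero hk) hk hk' hkk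
    · -- divides μ₁
      refine ⟨trigSum (ΛOf e₁ (aF Λ₁ c₁ h₁, bF Λ₁ c₁ h₁)) (cOf e₁ (aF Λ₁ c₁ h₁, bF Λ₁ c₁ h₁)),
        ⟨⟨_, _, rfl⟩, ?_⟩, ?_⟩
      · obtain ⟨r, hr⟩ := exists_torus_ne_zero he₁0
        intro h0
        have := bridge e₁ (aF Λ₁ c₁ h₁, bF Λ₁ c₁ h₁) r
        rw [h0] at this
        simp only [Pi.zero_apply] at this
        exact mul_ne_zero (e2_ne_zero _ r) hr this.symm
      · funext r
        rw [mu_eq Λ₁ c₁ h₁ r, he₁, map_mul, bridge, bridge, e2_zero, one_mul]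
        ring
    · -- divides μ₂
      refine ⟨trigSum (ΛOf e₂ (aF Λ₂ c₂ h₂, bF Λ₂ c₂ h₂)) (cOf e₂ (aF Λ₂ c₂ h₂, bF Λ₂ c₂ h₂)),
        ⟨⟨_, _, rfl⟩, ?_⟩, ?_⟩
      · obtain ⟨r, hr⟩ := exists_torus_ne_zero he₂0
        intro h0
        have := bridge e₂ (aF Λ₂ c₂ h₂, bF Λ₂ c₂ h₂) r
        rw [h0] at this
        simp only [Pi.zero_apply] at this
        exact mul_ne_zero (e2_ne_zero _ r) hr this.symm
      · funext r
        rw [mu_eq Λ₂ c₂ h₂ r, he₂, map_mul, bridge, bridge, e2_zero, one_mul]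
        ring


end Stmt12

/-- **Bézout for trigonometric polynomials.** If `μ₁, μ₂` are
trigonometric polynomials of degrees `(K₁,L₁)` and `(K₂,L₂)` with no common factor of
positive degree, then they have at most `(K₁+L₁)(K₂+L₂)` common zeros in `[0,1)²`. -/
theorem stmt12 (Λ₁ Λ₂ : Finset (ℤ × ℤ)) (c₁ c₂ : ℤ × ℤ → ℂ) (μ₁ μ₂ : ℝ × ℝ → ℂ)
    (h₁ : μ₁ = trigSum Λ₁ c₁) (h₁0 : μ₁ ≠ 0)
    (h₂ : μ₂ = trigSum Λ₂ c₂) (h₂0 : μ₂ ≠ 0)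
    (K₁ L₁ K₂ L₂ : ℤ)
    (hdeg₁ : degOf Λ₁ c₁ = (K₁, L₁)) (hdeg₂ : degOf Λ₂ c₂ = (K₂, L₂))
    (hcoprime : ¬ ∃ (Λγ : Finset (ℤ × ℤ)) (cγ : ℤ × ℤ → ℂ),
      trigSum Λγ cγ ≠ 0 ∧ degOf Λγ cγ ≠ (0, 0) ∧
      TrigDivides (trigSum Λγ cγ) μ₁ ∧ TrigDivides (trigSum Λγ cγ) μ₂) :
    {r : ℝ × ℝ | r ∈ Set.Ico (0:ℝ) 1 ×ˢ Set.Ico (0:ℝ) 1 ∧ μ₁ r = 0 ∧ μ₂ r = 0}.Finite ∧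
    (({r : ℝ × ℝ | r ∈ Set.Ico (0:ℝ) 1 ×ˢ Set.Ico (0:ℝ) 1 ∧ μ₁ r = 0 ∧ μ₂ r = 0}.ncard : ℤ)
      ≤ (K₁ + L₁) * (K₂ + L₂)) := by
  subst h₁ h₂
  have hF₁ : (Stmt12.Ff Λ₁ c₁).Nonempty := Stmt12.Ff_nonempty h₁0
  have hF₂ : (Stmt12.Ff Λ₂ c₂).Nonempty := Stmt12.Ff_nonempty h₂0
  set P₁ := Stmt12.Pof Λ₁ c₁ hF₁ with hP₁def
  set P₂ := Stmt12.Pof Λ₂ c₂ hF₂ with hP₂def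
  set d₁ : ℕ := (Stmt12.AX Λ₁ c₁ hF₁ - Stmt12.aF Λ₁ c₁ hF₁).toNat
    + (Stmt12.BY Λ₁ c₁ hF₁ - Stmt12.bF Λ₁ c₁ hF₁).toNat with hd₁def
  set d₂ : ℕ := (Stmt12.AX Λ₂ c₂ hF₂ - Stmt12.aF Λ₂ c₂ hF₂).toNat
    + (Stmt12.BY Λ₂ c₂ hF₂ - Stmt12.bF Λ₂ c₂ hF₂).toNat with hd₂def
  have hrel : IsRelPrime P₁ P₂ :=
    Stmt12.relprime_of_coprime Λ₁ Λ₂ c₁ c₂ hF₁ hF₂ hcoprime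
  obtain ⟨hZfin, hZcard⟩ := Stmt12.zs_card (Stmt12.Pof_ne_zero Λ₁ c₁ hF₁)
    (Stmt12.Pof_ne_zero Λ₂ c₂ hF₂) (Stmt12.tdeg_Pof Λ₁ c₁ hF₁) (Stmt12.tdeg_Pof Λ₂ c₂ hF₂) hrel
  set T : Set (ℝ × ℝ) :=
    {r : ℝ × ℝ | r ∈ Set.Ico (0:ℝ) 1 ×ˢ Set.Ico (0:ℝ) 1 ∧ trigSum Λ₁ c₁ r = 0 ∧
      trigSum Λ₂ c₂ r = 0} with hTdef
  set Φ : ℝ × ℝ → ℂ × ℂ := fun r => (Stmt12.ee r.1, Stmt12.ee r.2) with hΦdef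
  have hmapsto : ∀ r ∈ T, Φ r ∈ Stmt12.Zs P₁ P₂ := by
    rintro r ⟨hbox, hμ1, hμ2⟩
    constructor
    · have := Stmt12.mu_eq Λ₁ c₁ hF₁ r
      rw [hμ1] at this
      have h3 := (mul_eq_zero.1 this.symm).resolve_left (Stmt12.e2_ne_zero _ r)
      exact h3
    · have := Stmt12.mu_eq Λ₂ c₂ hF₂ r
      rw [hμ2] at this
      exact (mul_eq_zero.1 this.symm).resolve_left (Stmt12.e2_ne_zero _ r)
  have hinj : Set.InjOn Φ T := by
    rintro r ⟨hr, -⟩ r' ⟨hr', -⟩ heq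
    rw [Set.mem_prod] at hr hr'
    have e1 : Stmt12.ee r.1 = Stmt12.ee r'.1 := congrArg Prod.fst heq
    have e2 : Stmt12.ee r.2 = Stmt12.ee r'.2 := congrArg Prod.snd heq
    exact Prod.ext (Stmt12.ee_injOn hr.1 hr'.1 e1) (Stmt12.ee_injOn hr.2 hr'.2 e2)
  have hTfin : T.Finite := by
    apply Set.Finite.of_finite_image _ hinj
    exact hZfin.subset (Set.image_subset_iff.2 hmapsto)
  refine ⟨hTfin, ?_⟩
  have hcount : T.ncard ≤ d₁ * d₂ := by
    calc T.ncard = (Φ '' T).ncard := (Set.ncard_image_of_injOn hinj).symm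
      _ ≤ (Stmt12.Zs P₁ P₂).ncard := Set.ncard_le_ncard (Set.image_subset_iff.2 hmapsto) hZfin
      _ ≤ d₁ * d₂ := hZcard
  -- identify degrees
  have hdeg1' := Stmt12.degOf_eq Λ₁ c₁ hF₁
  have hdeg2' := Stmt12.degOf_eq Λ₂ c₂ hF₂
  rw [hdeg₁] at hdeg1'
  rw [hdeg₂] at hdeg2'
  have hK₁ : K₁ = Stmt12.AX Λ₁ c₁ hF₁ - Stmt12.aF Λ₁ c₁ hF₁ := congrArg Prod.fst hdeg1'
  have hL₁ : L₁ = Stmt12.BY Λ₁ c₁ hF₁ - Stmt12.bF Λ₁ c₁ hF₁ := congrArg Prod.snd hdeg1'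
  have hK₂ : K₂ = Stmt12.AX Λ₂ c₂ hF₂ - Stmt12.aF Λ₂ c₂ hF₂ := congrArg Prod.fst hdeg2'
  have hL₂ : L₂ = Stmt12.BY Λ₂ c₂ hF₂ - Stmt12.bF Λ₂ c₂ hF₂ := congrArg Prod.snd hdeg2'
  have q1 := Stmt12.aF_le_AX Λ₁ c₁ hF₁
  have q2 := Stmt12.bF_le_BY Λ₁ c₁ hF₁
  have q3 := Stmt12.aF_le_AX Λ₂ c₂ hF₂
  have q4 := Stmt12.bF_le_BY Λ₂ c₂ hF₂
  have hd₁ : (d₁ : ℤ) = K₁ + L₁ := by rw [hd₁def]; push_cast; omega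
  have hd₂ : (d₂ : ℤ) = K₂ + L₂ := by rw [hd₂def]; push_cast; omega
  calc (T.ncard : ℤ) ≤ ((d₁ * d₂ : ℕ) : ℤ) := by exact_mod_cast hcount
    _ = (K₁ + L₁) * (K₂ + L₂) := by push_cast; rw [hd₁, hd₂]


end
end
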